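/- arXiv:2101.00617 — 2 statements merged into one kernel-verified Lean document; each statement's English description precedes it below -/
import Mathlib

section
/- Let j ≥ 4 and n ≥ 2 be integers. If m_j(K_{1,2}, P_4, (n−1)K_2) = ⌊2(n−1)/j⌋ + 1, then m_j(K_{1,2}, P_4, nK_2) ≤ ⌊2n/j⌋ + 1; that is, with t = ⌊2n/j⌋ + 1, every 3-coloring of the edges of K_{j×t} contains a copy of K_{1,2} in the first color, or a copy of P_4 in the second color, or a matching nK_2 in the third color. -/
open SimpleGraph

/-- The complete multipartite graph `K_{j x t}` with `j` parts, each of size `t`. -/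
def multiK (j t : ℕ) : SimpleGraph (Fin j × Fin t) where
  Adj a b := a.1 ≠ b.1
  symm := ⟨fun _ _ h => Ne.symm h⟩
  loopless := ⟨fun _ h => h rfl⟩

/-- `G` contains a copy of `H`. -/
def Contains {α β : Type*} (G : SimpleGraph α) (H : SimpleGraph β) : Prop :=
  ∃ f : β → α, Function.Injective f ∧ ∀ ⦃a b⦄, H.Adj a b → G.Adj (f a) (f b)

/-- The monochromatic subgraph of `G` in color `i` under the edge-coloring `c`. -/
def colorClass {α : Type*} {k : ℕ} (G : SimpleGraph α) (c : Sym2 α → Fin k) (i : Fin k) :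
    SimpleGraph α where
  Adj a b := G.Adj a b ∧ c s(a, b) = i
  symm := ⟨fun _ _ h => ⟨h.1.symm, by rw [Sym2.eq_swap]; exact h.2⟩⟩
  loopless := ⟨fun _ h => G.irrefl h.1⟩

/-- The stripe `nK₂`: the graph consisting of `n` pairwise disjoint edges. -/
def stripe (n : ℕ) : SimpleGraph (Fin n × Fin 2) where
  Adj a b := a.1 = b.1 ∧ a.2 ≠ b.2
  symm := ⟨fun _ _ h => ⟨h.1.symm, h.2.symm⟩⟩
  loopless := ⟨fun _ h => h.2 rfl⟩

/-- Every 3-coloring of the edges of `K_{j x t}` yields a copy of `K_{1,2}` in color 0,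
or of `P₄` in color 1, or of `nK₂` in color 2. -/
def Arrows3 (j t n : ℕ) : Prop :=
  ∀ c : Sym2 (Fin j × Fin t) → Fin 3,
    Contains (colorClass (multiK j t) c 0) (pathGraph 3) ∨
    Contains (colorClass (multiK j t) c 1) (pathGraph 4) ∨
    Contains (colorClass (multiK j t) c 2) (stripe n)

/-- Every 2-coloring of the edges of `K_{j x t}` yields a copy of `nK₂` in color 0
or of `C₇` in color 1. -/
def ArrowsC7 (j t n : ℕ) : Prop :=
  ∀ c : Sym2 (Fin j × Fin t) → Fin 2,
    Contains (colorClass (multiK j t) c 0) (stripe n) ∨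
    Contains (colorClass (multiK j t) c 1) (cycleGraph 7)

-- ===== infrastructure =====

lemma fin2cases : ∀ b : Fin 2, b = 0 ∨ b = 1 := by decide

lemma fin2ne : ∀ a b : Fin 2, a ≠ b → (a = 0 ∧ b = 1) ∨ (a = 1 ∧ b = 0) := by decide

lemma Contains.comp {α β γ : Type*} {G : SimpleGraph α} {G' : SimpleGraph β} {H : SimpleGraph γ}
    (m : α → β) (hm : Function.Injective m)
    (hadj : ∀ ⦃a b⦄, G.Adj a b → G'.Adj (m a) (m b))
    (h : Contains G H) : Contains G' H := by
  obtain ⟨f, hf, ha⟩ := h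
  exact ⟨m ∘ f, hm.comp hf, fun a b hab => hadj (ha hab)⟩

lemma containsP3 {α : Type*} {G : SimpleGraph α} {x v y : α}
    (h1 : G.Adj x v) (h2 : G.Adj v y) (hxy : x ≠ y) : Contains G (pathGraph 3) := by
  have hxv := h1.ne
  have hvy := h2.ne
  refine ⟨![x, v, y], ?_, ?_⟩
  · intro a b hab
    fin_cases a <;> fin_cases b <;> simp_all
  · intro a b hab
    rw [pathGraph_adj] at hab
    fin_cases a <;> fin_cases b <;> simp_all <;>
      first | exact h1 | exact h2 | exact h1.symm | exact h2.symm

lemma containsP4 {α : Type*} {G : SimpleGraph α} {a b d e : α}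
    (h1 : G.Adj a b) (h2 : G.Adj b d) (h3 : G.Adj d e)
    (had : a ≠ d) (hbe : b ≠ e) (hae : a ≠ e) : Contains G (pathGraph 4) := by
  have hab := h1.ne
  have hbd := h2.ne
  have hde := h3.ne
  refine ⟨![a, b, d, e], ?_, ?_⟩
  · intro p q hpq
    fin_cases p <;> fin_cases q <;> simp_all
  · intro p q hpq
    rw [pathGraph_adj] at hpq
    fin_cases p <;> fin_cases q <;> simp_all <;>
      first | exact h1 | exact h2 | exact h3 | exact h1.symm | exact h2.symm | exact h3.symm

lemma fin2one : ∀ a : Fin 2, ¬ a = 0 → a = 1 := by decide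

lemma stripeAppend {α : Type*} {G : SimpleGraph α} {k : ℕ} (f : Fin k × Fin 2 → α)
    (hf : Function.Injective f)
    (hadj : ∀ i : Fin k, G.Adj (f (i, 0)) (f (i, 1)))
    {u v : α} (huv : G.Adj u v)
    (hu : ∀ p, f p ≠ u) (hv : ∀ p, f p ≠ v) :
    Contains G (stripe (k + 1)) := by
  refine ⟨fun x => if h : (x.1 : ℕ) < k then f (⟨x.1, h⟩, x.2) else if x.2 = 0 then u else v,
    ?_, ?_⟩
  · rintro ⟨i, a⟩ ⟨i', a'⟩ h
    dsimp only at h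
    by_cases hi : (i : ℕ) < k <;> by_cases hi' : (i' : ℕ) < k
    · rw [dif_pos hi, dif_pos hi'] at h
      have h1 := congrArg Prod.fst (hf h)
      have h2 := congrArg Prod.snd (hf h)
      simp only at h1 h2
      simp only [Prod.mk.injEq]
      exact ⟨Fin.ext (by simpa using congrArg Fin.val h1), h2⟩
    · rw [dif_pos hi, dif_neg hi'] at h
      by_cases ha' : a' = 0
      · rw [if_pos ha'] at h; exact absurd h (hu _)
      · rw [if_neg ha'] at h; exact absurd h (hv _)
    · rw [dif_neg hi, dif_pos hi'] at h
      by_cases ha : a = 0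
      · rw [if_pos ha] at h; exact absurd h.symm (hu _)
      · rw [if_neg ha] at h; exact absurd h.symm (hv _)
    · rw [dif_neg hi, dif_neg hi'] at h
      have hii : i = i' := Fin.ext (by omega)
      subst hii
      by_cases ha : a = 0 <;> by_cases ha' : a' = 0
      · rw [ha, ha']
      · rw [if_pos ha, if_neg ha'] at h; exact absurd h huv.ne
      · rw [if_neg ha, if_pos ha'] at h; exact absurd h.symm huv.ne
      · rw [fin2one a ha, fin2one a' ha']
  · rintro ⟨i, a⟩ ⟨i', a'⟩ hadj'
    obtain ⟨hii, haa⟩ := hadj'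
    dsimp only at hii haa ⊢
    subst hii
    by_cases hi : (i : ℕ) < k
    · rw [dif_pos hi, dif_pos hi]
      rcases fin2ne a a' haa with ⟨h0, h1⟩ | ⟨h0, h1⟩
      · rw [h0, h1]; exact hadj _
      · rw [h0, h1]; exact (hadj _).symm
    · rw [dif_neg hi, dif_neg hi]
      rcases fin2ne a a' haa with ⟨h0, h1⟩ | ⟨h0, h1⟩
      · rw [h0, h1]; simpa using huv
      · rw [h0, h1]; simpa using huv.symm

lemma stripeSwap {α : Type*} {G : SimpleGraph α} {k : ℕ} (f : Fin k × Fin 2 → α)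
    (hf : Function.Injective f)
    (hadj : ∀ i : Fin k, G.Adj (f (i, 0)) (f (i, 1)))
    (i₀ : Fin k) {u v : α} (huv : u ≠ v)
    (hu : ∀ p, f p ≠ u) (hv : ∀ p, f p ≠ v)
    (h1 : G.Adj u (f (i₀, 0))) (h2 : G.Adj v (f (i₀, 1))) :
    Contains G (stripe (k + 1)) := by
  have hne01 : ∀ i i' : Fin k, f (i, 0) ≠ f (i', 1) := by
    intro i i' h
    have := hf h
    simp only [Prod.mk.injEq] at this
    exact absurd this.2 (by decide)
  refine ⟨fun x => if h : (x.1 : ℕ) < k then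
      (if (⟨x.1, h⟩ : Fin k) = i₀ then (if x.2 = 0 then u else f (i₀, 0))
        else f (⟨x.1, h⟩, x.2))
    else (if x.2 = 0 then v else f (i₀, 1)), ?_, ?_⟩
  · rintro ⟨i, a⟩ ⟨i', a'⟩ h
    dsimp only at h
    by_cases hi : (i : ℕ) < k <;> by_cases hi' : (i' : ℕ) < k
    · rw [dif_pos hi, dif_pos hi'] at h
      by_cases hz : (⟨(i : ℕ), hi⟩ : Fin k) = i₀ <;>
        by_cases hz' : (⟨(i' : ℕ), hi'⟩ : Fin k) = i₀
      · rw [if_pos hz, if_pos hz'] at h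
        have hii : i = i' := by
          have := congrArg Fin.val (hz.trans hz'.symm)
          exact Fin.ext (by simpa using this)
        subst hii
        by_cases ha : a = 0 <;> by_cases ha' : a' = 0
        · rw [ha, ha']
        · rw [if_pos ha, if_neg ha'] at h; exact absurd h.symm (hu _)
        · rw [if_neg ha, if_pos ha'] at h; exact absurd h (hu _)
        · rw [fin2one a ha, fin2one a' ha']
      · rw [if_pos hz, if_neg hz'] at h
        by_cases ha : a = 0
        · rw [if_pos ha] at h; exact absurd h.symm (hu _)
        · rw [if_neg ha] at h
          have := hf h
          simp only [Prod.mk.injEq] at this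
          exact absurd this.1.symm hz'
      · rw [if_neg hz, if_pos hz'] at h
        by_cases ha' : a' = 0
        · rw [if_pos ha'] at h; exact absurd h (hu _)
        · rw [if_neg ha'] at h
          have := hf h
          simp only [Prod.mk.injEq] at this
          exact absurd this.1 hz
      · rw [if_neg hz, if_neg hz'] at h
        have h1' := congrArg Prod.fst (hf h)
        have h2' := congrArg Prod.snd (hf h)
        simp only at h1' h2'
        simp only [Prod.mk.injEq]
        exact ⟨Fin.ext (by simpa using congrArg Fin.val h1'), h2'⟩
    · rw [dif_pos hi, dif_neg hi'] at h
      by_cases hz : (⟨(i : ℕ), hi⟩ : Fin k) = i₀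
      · rw [if_pos hz] at h
        by_cases ha : a = 0 <;> by_cases ha' : a' = 0
        · rw [if_pos ha, if_pos ha'] at h; exact absurd h huv
        · rw [if_pos ha, if_neg ha'] at h; exact absurd h.symm (hu _)
        · rw [if_neg ha, if_pos ha'] at h; exact absurd h (hv _)
        · rw [if_neg ha, if_neg ha'] at h; exact absurd h (hne01 _ _)
      · rw [if_neg hz] at h
        by_cases ha' : a' = 0
        · rw [if_pos ha'] at h; exact absurd h (hv _)
        · rw [if_neg ha'] at h
          have := hf h
          simp only [Prod.mk.injEq] at this
          exact absurd this.1 hz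
    · rw [dif_neg hi, dif_pos hi'] at h
      by_cases hz' : (⟨(i' : ℕ), hi'⟩ : Fin k) = i₀
      · rw [if_pos hz'] at h
        by_cases ha : a = 0 <;> by_cases ha' : a' = 0
        · rw [if_pos ha, if_pos ha'] at h; exact absurd h.symm huv
        · rw [if_pos ha, if_neg ha'] at h; exact absurd h.symm (hv _)
        · rw [if_neg ha, if_pos ha'] at h; exact absurd h (hu _)
        · rw [if_neg ha, if_neg ha'] at h; exact absurd h.symm (hne01 _ _)
      · rw [if_neg hz'] at h
        by_cases ha : a = 0
        · rw [if_pos ha] at h; exact absurd h.symm (hv _)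
        · rw [if_neg ha] at h
          have := hf h.symm
          simp only [Prod.mk.injEq] at this
          exact absurd this.1 hz'
    · rw [dif_neg hi, dif_neg hi'] at h
      have hii : i = i' := Fin.ext (by omega)
      subst hii
      by_cases ha : a = 0 <;> by_cases ha' : a' = 0
      · rw [ha, ha']
      · rw [if_pos ha, if_neg ha'] at h; exact absurd h.symm (hv _)
      · rw [if_neg ha, if_pos ha'] at h; exact absurd h (hv _)
      · rw [fin2one a ha, fin2one a' ha']
  · rintro ⟨i, a⟩ ⟨i', a'⟩ hadj'
    obtain ⟨hii, haa⟩ := hadj'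
    dsimp only at hii haa ⊢
    subst hii
    by_cases hi : (i : ℕ) < k
    · rw [dif_pos hi, dif_pos hi]
      by_cases hz : (⟨(i : ℕ), hi⟩ : Fin k) = i₀
      · rw [if_pos hz, if_pos hz]
        rcases fin2ne a a' haa with ⟨h0, h1'⟩ | ⟨h0, h1'⟩
        · rw [h0, h1']; simpa using h1
        · rw [h0, h1']; simpa using h1.symm
      · rw [if_neg hz, if_neg hz]
        rcases fin2ne a a' haa with ⟨h0, h1'⟩ | ⟨h0, h1'⟩
        · rw [h0, h1']; exact hadj _
        · rw [h0, h1']; exact (hadj _).symm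
    · rw [dif_neg hi, dif_neg hi]
      rcases fin2ne a a' haa with ⟨h0, h1'⟩ | ⟨h0, h1'⟩
      · rw [h0, h1']; simpa using h2
      · rw [h0, h1']; simpa using h2.symm

lemma fin3of : ∀ x : Fin 3, x ≠ 1 → x = 0 ∨ x = 2 := by decide
lemma fin3all : ∀ x : Fin 3, x = 0 ∨ x = 1 ∨ x = 2 := by decide

section Pure
variable {α : Type*} {K : SimpleGraph α} {c : Sym2 α → Fin 3}

/-- star-form P3 fact: `v` is the middle vertex. -/
def P3fact (K : SimpleGraph α) (c : Sym2 α → Fin 3) : Prop :=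
  ∀ v x y : α, K.Adj v x → K.Adj v y → x ≠ y → c s(v, x) = 0 → c s(v, y) = 0 → False

def P4fact (K : SimpleGraph α) (c : Sym2 α → Fin 3) : Prop :=
  ∀ a b d e : α, K.Adj a b → K.Adj b d → K.Adj d e → a ≠ d → b ≠ e → a ≠ e →
    c s(a, b) = 1 → c s(b, d) = 1 → c s(d, e) = 1 → False

lemma csymm (c : Sym2 α → Fin 3) (a b : α) : c s(a, b) = c s(b, a) := by rw [Sym2.eq_swap]

lemma pairLemma (hP3 : P3fact K c) (u v x y : α)
    (aux : K.Adj u x) (auy : K.Adj u y) (avx : K.Adj v x) (avy : K.Adj v y)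
    (huv : u ≠ v) (hxy : x ≠ y)
    (F : c s(u, x) = 2 → c s(v, y) = 2 → False)
    (F' : c s(v, x) = 2 → c s(u, y) = 2 → False) :
    c s(u, x) = 1 ∨ c s(u, y) = 1 ∨ c s(v, x) = 1 ∨ c s(v, y) = 1 := by
  by_contra hcon
  push_neg at hcon
  obtain ⟨n1, n2, n3, n4⟩ := hcon
  rcases fin3of _ n1 with h1 | h1
  · rcases fin3of _ n2 with h2 | h2
    · exact hP3 u x y aux auy hxy h1 h2
    · rcases fin3of _ n3 with h3 | h3
      · exact hP3 x u v aux.symm avx.symm huv ((csymm c x u).trans h1) ((csymm c x v).trans h3)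
      · exact F' h3 h2
  · rcases fin3of _ n4 with h4 | h4
    · rcases fin3of _ n2 with h2 | h2
      · exact hP3 y u v auy.symm avy.symm huv ((csymm c y u).trans h2) ((csymm c y v).trans h4)
      · rcases fin3of _ n3 with h3 | h3
        · exact hP3 v x y avx avy hxy h3 h4
        · exact F' h3 h2
    · exact F h1 h4

lemma endgame (hP3 : P3fact K c) (hP4 : P4fact K c)
    (u v w x1 y1 x2 y2 : α)
    (hadjA : ∀ a b, (a = u ∨ a = v ∨ a = w) → (b = x1 ∨ b = y1 ∨ b = x2 ∨ b = y2) → K.Adj a b)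
    (huv : u ≠ v) (huw : u ≠ w) (hvw : v ≠ w)
    (d11 : x1 ≠ y1) (d22 : x2 ≠ y2) (d12 : x1 ≠ x2) (d1y2 : x1 ≠ y2)
    (dy1x2 : y1 ≠ x2) (dy12 : y1 ≠ y2)
    (F1 : ∀ a b, (a = u ∨ a = v ∨ a = w) → (b = u ∨ b = v ∨ b = w) → a ≠ b →
      c s(a, x1) = 2 → c s(b, y1) = 2 → False)
    (F2 : ∀ a b, (a = u ∨ a = v ∨ a = w) → (b = u ∨ b = v ∨ b = w) → a ≠ b →
      c s(a, x2) = 2 → c s(b, y2) = 2 → False)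
    (hu1 : c s(u, x1) = 1) (hu2 : c s(u, x2) = 1)
    (hv1 : c s(v, x1) = 1 ∨ c s(v, y1) = 1) (hv2 : c s(v, x2) = 1 ∨ c s(v, y2) = 1) : False := by
  have aux1 : K.Adj u x1 := hadjA u x1 (Or.inl rfl) (Or.inl rfl)
  have aux2 : K.Adj u x2 := hadjA u x2 (Or.inl rfl) (Or.inr (Or.inr (Or.inl rfl)))
  have auy1 : K.Adj u y1 := hadjA u y1 (Or.inl rfl) (Or.inr (Or.inl rfl))
  have auy2 : K.Adj u y2 := hadjA u y2 (Or.inl rfl) (Or.inr (Or.inr (Or.inr rfl)))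
  have avx1 : K.Adj v x1 := hadjA v x1 (Or.inr (Or.inl rfl)) (Or.inl rfl)
  have avx2 : K.Adj v x2 := hadjA v x2 (Or.inr (Or.inl rfl)) (Or.inr (Or.inr (Or.inl rfl)))
  have avy1 : K.Adj v y1 := hadjA v y1 (Or.inr (Or.inl rfl)) (Or.inr (Or.inl rfl))
  have avy2 : K.Adj v y2 := hadjA v y2 (Or.inr (Or.inl rfl)) (Or.inr (Or.inr (Or.inr rfl)))
  have awx1 : K.Adj w x1 := hadjA w x1 (Or.inr (Or.inr rfl)) (Or.inl rfl)
  have awx2 : K.Adj w x2 := hadjA w x2 (Or.inr (Or.inr rfl)) (Or.inr (Or.inr (Or.inl rfl)))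
  have awy1 : K.Adj w y1 := hadjA w y1 (Or.inr (Or.inr rfl)) (Or.inr (Or.inl rfl))
  have awy2 : K.Adj w y2 := hadjA w y2 (Or.inr (Or.inr rfl)) (Or.inr (Or.inr (Or.inr rfl)))
  -- v is 1-connected to y1 and y2
  have hvy1 : c s(v, y1) = 1 := by
    rcases hv1 with h | h
    · exact (hP4 v x1 u x2 avx1 aux1.symm aux2 huv.symm d12 avx2.ne
        h ((csymm c x1 u).trans hu1) hu2).elim
    · exact h
  have hvy2 : c s(v, y2) = 1 := by
    rcases hv2 with h | h
    · exact (hP4 v x2 u x1 avx2 aux2.symm aux1 huv.symm d12.symm avx1.ne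
        h ((csymm c x2 u).trans hu2) hu1).elim
    · exact h
  have hcuy1 : c s(u, y1) ≠ 1 := fun h =>
    hP4 u y1 v y2 auy1 avy1.symm avy2 huv dy12 auy2.ne
      h ((csymm c y1 v).trans hvy1) hvy2
  have hcuy2 : c s(u, y2) ≠ 1 := fun h =>
    hP4 u y2 v y1 auy2 avy2.symm avy1 huv dy12.symm auy1.ne
      h ((csymm c y2 v).trans hvy2) hvy1
  have hcvx1 : c s(v, x1) ≠ 1 := fun h =>
    hP4 v x1 u x2 avx1 aux1.symm aux2 huv.symm d12 avx2.ne
      h ((csymm c x1 u).trans hu1) hu2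
  have hcvx2 : c s(v, x2) ≠ 1 := fun h =>
    hP4 v x2 u x1 avx2 aux2.symm aux1 huv.symm d12.symm avx1.ne
      h ((csymm c x2 u).trans hu2) hu1
  have C1 : c s(u, y1) = 0 ∨ c s(v, x1) = 0 := by
    rcases fin3of _ hcuy1 with h | h
    · exact Or.inl h
    · rcases fin3of _ hcvx1 with h' | h'
      · exact Or.inr h'
      · exact (F1 v u (Or.inr (Or.inl rfl)) (Or.inl rfl) huv.symm h' h).elim
  have C2 : c s(u, y2) = 0 ∨ c s(v, x2) = 0 := by
    rcases fin3of _ hcuy2 with h | h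
    · exact Or.inl h
    · rcases fin3of _ hcvx2 with h' | h'
      · exact Or.inr h'
      · exact (F2 v u (Or.inr (Or.inl rfl)) (Or.inl rfl) huv.symm h' h).elim
  rcases C1 with c1 | c1 <;> rcases C2 with c2 | c2
  · exact hP3 u y1 y2 auy1 auy2 dy12 c1 c2
  · -- c1 : c(u,y1)=0, c2 : c(v,x2)=0
    have hvx1 : c s(v, x1) = 2 := by
      rcases fin3all (c s(v, x1)) with h | h | h
      · exact (hP3 v x1 x2 avx1 avx2 d12 h c2).elim
      · exact (hcvx1 h).elim
      · exact h
    have hwy1 : c s(w, y1) = 0 := by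
      have hne1 : c s(w, y1) ≠ 1 := fun h =>
        hP4 w y1 v y2 awy1 avy1.symm avy2 hvw.symm dy12 awy2.ne
          h ((csymm c y1 v).trans hvy1) hvy2
      rcases fin3of _ hne1 with h | h
      · exact h
      · exact (F1 v w (Or.inr (Or.inl rfl)) (Or.inr (Or.inr rfl)) hvw hvx1 h).elim
    have huy2 : c s(u, y2) = 2 := by
      rcases fin3all (c s(u, y2)) with h | h | h
      · exact (hP3 u y1 y2 auy1 auy2 dy12 c1 h).elim
      · exact (hcuy2 h).elim
      · exact h
    have hwx2 : c s(w, x2) = 0 := by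
      have hne1 : c s(w, x2) ≠ 1 := fun h =>
        hP4 w x2 u x1 awx2 aux2.symm aux1 huw.symm d12.symm awx1.ne
          h ((csymm c x2 u).trans hu2) hu1
      rcases fin3of _ hne1 with h | h
      · exact h
      · exact (F2 w u (Or.inr (Or.inr rfl)) (Or.inl rfl) huw.symm h huy2).elim
    exact hP3 w y1 x2 awy1 awx2 dy1x2 hwy1 hwx2
  · -- c1 : c(v,x1)=0, c2 : c(u,y2)=0
    have hvx2 : c s(v, x2) = 2 := by
      rcases fin3all (c s(v, x2)) with h | h | h
      · exact (hP3 v x1 x2 avx1 avx2 d12 c1 h).elim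
      · exact (hcvx2 h).elim
      · exact h
    have hwy2 : c s(w, y2) = 0 := by
      have hne1 : c s(w, y2) ≠ 1 := fun h =>
        hP4 w y2 v y1 awy2 avy2.symm avy1 hvw.symm dy12.symm awy1.ne
          h ((csymm c y2 v).trans hvy2) hvy1
      rcases fin3of _ hne1 with h | h
      · exact h
      · exact (F2 v w (Or.inr (Or.inl rfl)) (Or.inr (Or.inr rfl)) hvw hvx2 h).elim
    have huy1 : c s(u, y1) = 2 := by
      rcases fin3all (c s(u, y1)) with h | h | h
      · exact (hP3 u y1 y2 auy1 auy2 dy12 h c2).elim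
      · exact (hcuy1 h).elim
      · exact h
    have hwx1 : c s(w, x1) = 0 := by
      have hne1 : c s(w, x1) ≠ 1 := fun h =>
        hP4 w x1 u x2 awx1 aux1.symm aux2 huw.symm d12 awx2.ne
          h ((csymm c x1 u).trans hu1) hu2
      rcases fin3of _ hne1 with h | h
      · exact h
      · exact (F1 w u (Or.inr (Or.inr rfl)) (Or.inl rfl) huw.symm h huy1).elim
    exact hP3 w x1 y2 awx1 awy2 d1y2 hwx1 hwy2
  · exact hP3 v x1 x2 avx1 avx2 d12 c1 c2

lemma configB (hP3 : P3fact K c) (hP4 : P4fact K c)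
    (p q r x1 y1 x2 y2 x3 y3 : α)
    (hadjA : ∀ a b, (a = p ∨ a = q ∨ a = r) →
      (b = x1 ∨ b = y1 ∨ b = x2 ∨ b = y2 ∨ b = x3 ∨ b = y3) → K.Adj a b)
    (hpq : p ≠ q) (hpr : p ≠ r) (hqr : q ≠ r)
    (d12 : x1 ≠ x2) (d1y2 : x1 ≠ y2) (d1y3 : x1 ≠ y3)
    (dy1y2 : y1 ≠ y2) (dy1x2 : y1 ≠ x2) (dy1x3 : y1 ≠ x3)
    (d23 : x2 ≠ x3) (dy2y3 : y2 ≠ y3)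
    (F1 : ∀ a b, (a = p ∨ a = q ∨ a = r) → (b = p ∨ b = q ∨ b = r) → a ≠ b →
      c s(a, x1) = 2 → c s(b, y1) = 2 → False)
    (F2 : ∀ a b, (a = p ∨ a = q ∨ a = r) → (b = p ∨ b = q ∨ b = r) → a ≠ b →
      c s(a, x2) = 2 → c s(b, y2) = 2 → False)
    (F3 : ∀ a b, (a = p ∨ a = q ∨ a = r) → (b = p ∨ b = q ∨ b = r) → a ≠ b →
      c s(a, x3) = 2 → c s(b, y3) = 2 → False)
    (hp1 : c s(p, x1) = 1) (hp2 : c s(p, x2) = 1) (hq3 : c s(q, x3) = 1)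
    (hq1 : c s(q, x1) = 1 ∨ c s(q, y1) = 1)
    (hr2 : c s(r, x2) = 1 ∨ c s(r, y2) = 1)
    (hr3 : c s(r, x3) = 1 ∨ c s(r, y3) = 1) : False := by
  have apx1 : K.Adj p x1 := hadjA p x1 (Or.inl rfl) (Or.inl rfl)
  have apy1 : K.Adj p y1 := hadjA p y1 (Or.inl rfl) (Or.inr (Or.inl rfl))
  have apx2 : K.Adj p x2 := hadjA p x2 (Or.inl rfl) (Or.inr (Or.inr (Or.inl rfl)))
  have apy2 : K.Adj p y2 := hadjA p y2 (Or.inl rfl) (Or.inr (Or.inr (Or.inr (Or.inl rfl))))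
  have apx3 : K.Adj p x3 := hadjA p x3 (Or.inl rfl) (Or.inr (Or.inr (Or.inr (Or.inr (Or.inl rfl)))))
  have apy3 : K.Adj p y3 := hadjA p y3 (Or.inl rfl) (Or.inr (Or.inr (Or.inr (Or.inr (Or.inr rfl)))))
  have aqx1 : K.Adj q x1 := hadjA q x1 (Or.inr (Or.inl rfl)) (Or.inl rfl)
  have aqy1 : K.Adj q y1 := hadjA q y1 (Or.inr (Or.inl rfl)) (Or.inr (Or.inl rfl))
  have aqx2 : K.Adj q x2 := hadjA q x2 (Or.inr (Or.inl rfl)) (Or.inr (Or.inr (Or.inl rfl)))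
  have aqy2 : K.Adj q y2 := hadjA q y2 (Or.inr (Or.inl rfl)) (Or.inr (Or.inr (Or.inr (Or.inl rfl))))
  have aqx3 : K.Adj q x3 := hadjA q x3 (Or.inr (Or.inl rfl)) (Or.inr (Or.inr (Or.inr (Or.inr (Or.inl rfl)))))
  have aqy3 : K.Adj q y3 := hadjA q y3 (Or.inr (Or.inl rfl)) (Or.inr (Or.inr (Or.inr (Or.inr (Or.inr rfl)))))
  have arx1 : K.Adj r x1 := hadjA r x1 (Or.inr (Or.inr rfl)) (Or.inl rfl)
  have ary1 : K.Adj r y1 := hadjA r y1 (Or.inr (Or.inr rfl)) (Or.inr (Or.inl rfl))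
  have arx2 : K.Adj r x2 := hadjA r x2 (Or.inr (Or.inr rfl)) (Or.inr (Or.inr (Or.inl rfl)))
  have ary2 : K.Adj r y2 := hadjA r y2 (Or.inr (Or.inr rfl)) (Or.inr (Or.inr (Or.inr (Or.inl rfl))))
  have arx3 : K.Adj r x3 := hadjA r x3 (Or.inr (Or.inr rfl)) (Or.inr (Or.inr (Or.inr (Or.inr (Or.inl rfl)))))
  have ary3 : K.Adj r y3 := hadjA r y3 (Or.inr (Or.inr rfl)) (Or.inr (Or.inr (Or.inr (Or.inr (Or.inr rfl)))))
  have hqy1 : c s(q, y1) = 1 := by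
    rcases hq1 with h | h
    · exact (hP4 q x1 p x2 aqx1 apx1.symm apx2 hpq.symm d12 aqx2.ne
        h ((csymm c x1 p).trans hp1) hp2).elim
    · exact h
  have hry2 : c s(r, y2) = 1 := by
    rcases hr2 with h | h
    · exact (hP4 r x2 p x1 arx2 apx2.symm apx1 hpr.symm d12.symm arx1.ne
        h ((csymm c x2 p).trans hp2) hp1).elim
    · exact h
  have hry3 : c s(r, y3) = 1 := by
    rcases hr3 with h | h
    · exact (hP4 r x3 q y1 arx3 aqx3.symm aqy1 hqr.symm dy1x3.symm ary1.ne
        h ((csymm c x3 q).trans hq3) hqy1).elim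
    · exact h
  have hcpy1 : c s(p, y1) ≠ 1 := fun h =>
    hP4 p y1 q x3 apy1 aqy1.symm aqx3 hpq dy1x3 apx3.ne
      h ((csymm c y1 q).trans hqy1) hq3
  have hcqx1 : c s(q, x1) ≠ 1 := fun h =>
    hP4 q x1 p x2 aqx1 apx1.symm apx2 hpq.symm d12 aqx2.ne
      h ((csymm c x1 p).trans hp1) hp2
  have hcpy2 : c s(p, y2) ≠ 1 := fun h =>
    hP4 p y2 r y3 apy2 ary2.symm ary3 hpr dy2y3 apy3.ne
      h ((csymm c y2 r).trans hry2) hry3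
  have hcrx2 : c s(r, x2) ≠ 1 := fun h =>
    hP4 r x2 p x1 arx2 apx2.symm apx1 hpr.symm d12.symm arx1.ne
      h ((csymm c x2 p).trans hp2) hp1
  have hcqy3 : c s(q, y3) ≠ 1 := fun h =>
    hP4 q y3 r y2 aqy3 ary3.symm ary2 hqr dy2y3.symm aqy2.ne
      h ((csymm c y3 r).trans hry3) hry2
  have hcrx3 : c s(r, x3) ≠ 1 := fun h =>
    hP4 r x3 q y1 arx3 aqx3.symm aqy1 hqr.symm dy1x3.symm ary1.ne
      h ((csymm c x3 q).trans hq3) hqy1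
  have C1 : c s(p, y1) = 0 ∨ c s(q, x1) = 0 := by
    rcases fin3of _ hcpy1 with h | h
    · exact Or.inl h
    · rcases fin3of _ hcqx1 with h' | h'
      · exact Or.inr h'
      · exact (F1 q p (Or.inr (Or.inl rfl)) (Or.inl rfl) hpq.symm h' h).elim
  have C2 : c s(p, y2) = 0 ∨ c s(r, x2) = 0 := by
    rcases fin3of _ hcpy2 with h | h
    · exact Or.inl h
    · rcases fin3of _ hcrx2 with h' | h'
      · exact Or.inr h'
      · exact (F2 r p (Or.inr (Or.inr rfl)) (Or.inl rfl) hpr.symm h' h).elim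
  have C3 : c s(q, y3) = 0 ∨ c s(r, x3) = 0 := by
    rcases fin3of _ hcqy3 with h | h
    · exact Or.inl h
    · rcases fin3of _ hcrx3 with h' | h'
      · exact Or.inr h'
      · exact (F3 r q (Or.inr (Or.inr rfl)) (Or.inr (Or.inl rfl)) hqr.symm h' h).elim
  rcases C1 with c1 | c1 <;> rcases C2 with c2 | c2 <;> rcases C3 with c3 | c3
  · exact hP3 p y1 y2 apy1 apy2 dy1y2 c1 c2
  · exact hP3 p y1 y2 apy1 apy2 dy1y2 c1 c2
  · -- c1 : p y1 = 0, c2 : r x2 = 0, c3 : q y3 = 0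
    have hqx1 : c s(q, x1) = 2 := by
      rcases fin3all (c s(q, x1)) with h | h | h
      · exact (hP3 q x1 y3 aqx1 aqy3 d1y3 h c3).elim
      · exact (hcqx1 h).elim
      · exact h
    have hry1 : c s(r, y1) = 2 := by
      have hne1 : c s(r, y1) ≠ 1 := fun h =>
        hP4 r y1 q x3 ary1 aqy1.symm aqx3 hqr.symm dy1x3 arx3.ne
          h ((csymm c y1 q).trans hqy1) hq3
      rcases fin3of _ hne1 with h | h
      · exact (hP3 r y1 x2 ary1 arx2 dy1x2 h c2).elim
      · exact h
    exact F1 q r (Or.inr (Or.inl rfl)) (Or.inr (Or.inr rfl)) hqr hqx1 hry1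
  · -- c1 : p y1 = 0, c2 : r x2 = 0, c3 : r x3 = 0
    exact hP3 r x2 x3 arx2 arx3 d23 c2 c3
  · exact hP3 q x1 y3 aqx1 aqy3 d1y3 c1 c3
  · -- c1 : q x1 = 0, c2 : p y2 = 0, c3 : r x3 = 0
    have hqy2 : c s(q, y2) = 2 := by
      have hne1 : c s(q, y2) ≠ 1 := fun h =>
        hP4 q y2 r y3 aqy2 ary2.symm ary3 hqr dy2y3 aqy3.ne
          h ((csymm c y2 r).trans hry2) hry3
      rcases fin3of _ hne1 with h | h
      · exact (hP3 q x1 y2 aqx1 aqy2 d1y2 c1 h).elim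
      · exact h
    have hrx2 : c s(r, x2) = 2 := by
      rcases fin3of _ hcrx2 with h | h
      · exact (hP3 r x2 x3 arx2 arx3 d23 h c3).elim
      · exact h
    exact F2 r q (Or.inr (Or.inr rfl)) (Or.inr (Or.inl rfl)) hqr.symm hrx2 hqy2
  · exact hP3 q x1 y3 aqx1 aqy3 d1y3 c1 c3
  · exact hP3 r x2 x3 arx2 arx3 d23 c2 c3

lemma triangleLemma (hP3 : P3fact K c) (hP4 : P4fact K c)
    (s' m t' x y : α)
    (asx : K.Adj s' x) (asy : K.Adj s' y) (atx : K.Adj t' x) (aty : K.Adj t' y)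
    (asm : K.Adj s' m) (amt : K.Adj m t')
    (hst : s' ≠ t') (hxy : x ≠ y) (hxm : x ≠ m) (hym : y ≠ m)
    (hsm : c s(s', m) = 1) (hmt : c s(m, t') = 1)
    (F : ∀ a b, (a = s' ∨ a = t') → (b = s' ∨ b = t') → a ≠ b →
      c s(a, x) = 2 → c s(b, y) = 2 → False) : False := by
  have hsx : c s(s', x) ≠ 1 := fun h =>
    hP4 x s' m t' asx.symm asm amt hxm hst atx.ne.symm ((csymm c x s').trans h) hsm hmt
  have hsy : c s(s', y) ≠ 1 := fun h =>
    hP4 y s' m t' asy.symm asm amt hym hst aty.ne.symm ((csymm c y s').trans h) hsm hmt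
  have htx : c s(t', x) ≠ 1 := fun h =>
    hP4 x t' m s' atx.symm amt.symm asm.symm hxm hst.symm asx.ne.symm
      ((csymm c x t').trans h) ((csymm c t' m).trans hmt) ((csymm c m s').trans hsm)
  have hty : c s(t', y) ≠ 1 := fun h =>
    hP4 y t' m s' aty.symm amt.symm asm.symm hym hst.symm asy.ne.symm
      ((csymm c y t').trans h) ((csymm c t' m).trans hmt) ((csymm c m s').trans hsm)
  have C1 : c s(s', x) = 0 ∨ c s(t', y) = 0 := by
    rcases fin3of _ hsx with h | h
    · exact Or.inl h
    · rcases fin3of _ hty with h' | h'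
      · exact Or.inr h'
      · exact (F s' t' (Or.inl rfl) (Or.inr rfl) hst h h').elim
  have C2 : c s(s', y) = 0 ∨ c s(t', x) = 0 := by
    rcases fin3of _ hsy with h | h
    · exact Or.inl h
    · rcases fin3of _ htx with h' | h'
      · exact Or.inr h'
      · exact (F t' s' (Or.inr rfl) (Or.inl rfl) hst.symm h' h).elim
  rcases C1 with c1 | c1 <;> rcases C2 with c2 | c2
  · exact hP3 s' x y asx asy hxy c1 c2
  · exact hP3 x s' t' asx.symm atx.symm hst ((csymm c x s').trans c1) ((csymm c x t').trans c2)
  · exact hP3 y s' t' asy.symm aty.symm hst ((csymm c y s').trans c2) ((csymm c y t').trans c1)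
  · exact hP3 t' x y atx aty hxy c2 c1

lemma qLemma (hP3 : P3fact K c) (hP4 : P4fact K c)
    (a a' b d : α)
    (aab : K.Adj a b) (aad : K.Adj a d) (aab' : K.Adj a' b) (aad' : K.Adj a' d)
    (abd : K.Adj b d) (haa : a ≠ a')
    (cab : c s(a, b) = 0 ∨ c s(a, b) = 1)
    (cad : c s(a, d) = 0 ∨ c s(a, d) = 1)
    (cab' : c s(a', b) = 0 ∨ c s(a', b) = 1)
    (cad' : c s(a', d) = 0 ∨ c s(a', d) = 1)
    (cbd : c s(b, d) = 0 ∨ c s(b, d) = 1) : False := by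
  rcases cbd with hbd | hbd
  · -- bd = 0 : forces all four cross edges to be 1, P4 b-a-d-a'
    have h1 : c s(a, b) = 1 := by
      rcases cab with h | h
      · exact (hP3 b a d aab.symm abd aad.ne ((csymm c b a).trans h) hbd).elim
      · exact h
    have h2 : c s(a', d) = 1 := by
      rcases cad' with h | h
      · exact (hP3 d a' b aad'.symm abd.symm aab'.ne ((csymm c d a').trans h)
          ((csymm c d b).trans hbd)).elim
      · exact h
    have h3 : c s(a, d) = 1 := by
      rcases cad with h | h
      · exact (hP3 d a b aad.symm abd.symm aab.ne ((csymm c d a).trans h)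
          ((csymm c d b).trans hbd)).elim
      · exact h
    exact hP4 b a d a' aab.symm aad aad'.symm abd.ne haa aab'.ne.symm
      ((csymm c b a).trans h1) h3 ((csymm c d a').trans h2)
  · -- bd = 1
    rcases cab with hab | hab
    · -- ab = 0
      rcases cab' with hab' | hab'
      · exact hP3 b a a' aab.symm aab'.symm haa ((csymm c b a).trans hab)
          ((csymm c b a').trans hab')
      · rcases cad with had | had
        · exact hP3 a b d aab aad abd.ne hab had
        · -- P4 a' - b - d - a
          exact hP4 a' b d a aab' abd aad.symm aad'.ne aab.ne.symm haa.symm hab' hbd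
            ((csymm c d a).trans had)
    · -- ab = 1
      rcases cad' with had' | had'
      · rcases cab' with hab' | hab'
        · exact hP3 a' b d aab' aad' abd.ne hab' had'
        · rcases cad with had | had
          · exact hP3 d a a' aad.symm aad'.symm haa ((csymm c d a).trans had)
              ((csymm c d a').trans had')
          · -- P4 a' - b - d - a
            exact hP4 a' b d a aab' abd aad.symm aad'.ne aab.ne.symm haa.symm hab' hbd
              ((csymm c d a).trans had)
      · -- a'd = 1 : P4 a' - d - b - a
        exact hP4 a' d b a aad' abd.symm aab.symm aab'.ne aad.ne.symm haa.symm had'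
          ((csymm c d b).trans hbd) ((csymm c b a).trans hab)

lemma or4p12 {A B C D : Prop} : (A ∨ B ∨ C ∨ D) → (B ∨ A ∨ C ∨ D) := by tauto
lemma or4p34 {A B C D : Prop} : (A ∨ B ∨ C ∨ D) → (A ∨ B ∨ D ∨ C) := by tauto
lemma or6p12 {A B C D E F : Prop} : (A ∨ B ∨ C ∨ D ∨ E ∨ F) → (B ∨ A ∨ C ∨ D ∨ E ∨ F) := by tauto
lemma or6p34 {A B C D E F : Prop} : (A ∨ B ∨ C ∨ D ∨ E ∨ F) → (A ∨ B ∨ D ∨ C ∨ E ∨ F) := by tauto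
lemma or6p56 {A B C D E F : Prop} : (A ∨ B ∨ C ∨ D ∨ E ∨ F) → (A ∨ B ∨ C ∨ D ∨ F ∨ E) := by tauto

lemma endgameW (hP3 : P3fact K c) (hP4 : P4fact K c)
    (u v w x1 y1 x2 y2 : α)
    (hadjA : ∀ a b, (a = u ∨ a = v ∨ a = w) → (b = x1 ∨ b = y1 ∨ b = x2 ∨ b = y2) → K.Adj a b)
    (huv : u ≠ v) (huw : u ≠ w) (hvw : v ≠ w)
    (d11 : x1 ≠ y1) (d22 : x2 ≠ y2)
    (hcr : ∀ z z', (z = x1 ∨ z = y1) → (z' = x2 ∨ z' = y2) → z ≠ z')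
    (F1 : ∀ a b, (a = u ∨ a = v ∨ a = w) → (b = u ∨ b = v ∨ b = w) → a ≠ b →
      c s(a, x1) = 2 → c s(b, y1) = 2 → False)
    (F2 : ∀ a b, (a = u ∨ a = v ∨ a = w) → (b = u ∨ b = v ∨ b = w) → a ≠ b →
      c s(a, x2) = 2 → c s(b, y2) = 2 → False)
    (hu1 : c s(u, x1) = 1 ∨ c s(u, y1) = 1) (hu2 : c s(u, x2) = 1 ∨ c s(u, y2) = 1)
    (hv1 : c s(v, x1) = 1 ∨ c s(v, y1) = 1) (hv2 : c s(v, x2) = 1 ∨ c s(v, y2) = 1) : False := by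
  have F1' : ∀ a b, (a = u ∨ a = v ∨ a = w) → (b = u ∨ b = v ∨ b = w) → a ≠ b →
      c s(a, y1) = 2 → c s(b, x1) = 2 → False :=
    fun a b ha hb hab c1 c2 => F1 b a hb ha hab.symm c2 c1
  have F2' : ∀ a b, (a = u ∨ a = v ∨ a = w) → (b = u ∨ b = v ∨ b = w) → a ≠ b →
      c s(a, y2) = 2 → c s(b, x2) = 2 → False :=
    fun a b ha hb hab c1 c2 => F2 b a hb ha hab.symm c2 c1
  rcases hu1 with h1 | h1 <;> rcases hu2 with h2 | h2
  · exact endgame hP3 hP4 u v w x1 y1 x2 y2 hadjA huv huw hvw d11 d22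
      (hcr x1 x2 (Or.inl rfl) (Or.inl rfl)) (hcr x1 y2 (Or.inl rfl) (Or.inr rfl))
      (hcr y1 x2 (Or.inr rfl) (Or.inl rfl)) (hcr y1 y2 (Or.inr rfl) (Or.inr rfl))
      F1 F2 h1 h2 hv1 hv2
  · exact endgame hP3 hP4 u v w x1 y1 y2 x2 (fun a b ha hb => hadjA a b ha (or4p34 hb))
      huv huw hvw d11 d22.symm
      (hcr x1 y2 (Or.inl rfl) (Or.inr rfl)) (hcr x1 x2 (Or.inl rfl) (Or.inl rfl))
      (hcr y1 y2 (Or.inr rfl) (Or.inr rfl)) (hcr y1 x2 (Or.inr rfl) (Or.inl rfl))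
      F1 F2' h1 h2 hv1 hv2.symm
  · exact endgame hP3 hP4 u v w y1 x1 x2 y2 (fun a b ha hb => hadjA a b ha (or4p12 hb))
      huv huw hvw d11.symm d22
      (hcr y1 x2 (Or.inr rfl) (Or.inl rfl)) (hcr y1 y2 (Or.inr rfl) (Or.inr rfl))
      (hcr x1 x2 (Or.inl rfl) (Or.inl rfl)) (hcr x1 y2 (Or.inl rfl) (Or.inr rfl))
      F1' F2 h1 h2 hv1.symm hv2
  · exact endgame hP3 hP4 u v w y1 x1 y2 x2
      (fun a b ha hb => hadjA a b ha (or4p34 (or4p12 hb)))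
      huv huw hvw d11.symm d22.symm
      (hcr y1 y2 (Or.inr rfl) (Or.inr rfl)) (hcr y1 x2 (Or.inr rfl) (Or.inl rfl))
      (hcr x1 y2 (Or.inl rfl) (Or.inr rfl)) (hcr x1 x2 (Or.inl rfl) (Or.inl rfl))
      F1' F2' h1 h2 hv1.symm hv2.symm

lemma configBW (hP3 : P3fact K c) (hP4 : P4fact K c)
    (p q r x1 y1 x2 y2 x3 y3 : α)
    (hadjA : ∀ a b, (a = p ∨ a = q ∨ a = r) →
      (b = x1 ∨ b = y1 ∨ b = x2 ∨ b = y2 ∨ b = x3 ∨ b = y3) → K.Adj a b)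
    (hpq : p ≠ q) (hpr : p ≠ r) (hqr : q ≠ r)
    (h12 : ∀ z z', (z = x1 ∨ z = y1) → (z' = x2 ∨ z' = y2) → z ≠ z')
    (h13 : ∀ z z', (z = x1 ∨ z = y1) → (z' = x3 ∨ z' = y3) → z ≠ z')
    (h23 : ∀ z z', (z = x2 ∨ z = y2) → (z' = x3 ∨ z' = y3) → z ≠ z')
    (F1 : ∀ a b, (a = p ∨ a = q ∨ a = r) → (b = p ∨ b = q ∨ b = r) → a ≠ b →
      c s(a, x1) = 2 → c s(b, y1) = 2 → False)
    (F2 : ∀ a b, (a = p ∨ a = q ∨ a = r) → (b = p ∨ b = q ∨ b = r) → a ≠ b →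
      c s(a, x2) = 2 → c s(b, y2) = 2 → False)
    (F3 : ∀ a b, (a = p ∨ a = q ∨ a = r) → (b = p ∨ b = q ∨ b = r) → a ≠ b →
      c s(a, x3) = 2 → c s(b, y3) = 2 → False)
    (hp1 : c s(p, x1) = 1 ∨ c s(p, y1) = 1) (hp2 : c s(p, x2) = 1 ∨ c s(p, y2) = 1)
    (hq3 : c s(q, x3) = 1 ∨ c s(q, y3) = 1)
    (hq1 : c s(q, x1) = 1 ∨ c s(q, y1) = 1)
    (hr2 : c s(r, x2) = 1 ∨ c s(r, y2) = 1)
    (hr3 : c s(r, x3) = 1 ∨ c s(r, y3) = 1) : False := by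
  have F1' : ∀ a b, (a = p ∨ a = q ∨ a = r) → (b = p ∨ b = q ∨ b = r) → a ≠ b →
      c s(a, y1) = 2 → c s(b, x1) = 2 → False :=
    fun a b ha hb hab c1 c2 => F1 b a hb ha hab.symm c2 c1
  have F2' : ∀ a b, (a = p ∨ a = q ∨ a = r) → (b = p ∨ b = q ∨ b = r) → a ≠ b →
      c s(a, y2) = 2 → c s(b, x2) = 2 → False :=
    fun a b ha hb hab c1 c2 => F2 b a hb ha hab.symm c2 c1
  have F3' : ∀ a b, (a = p ∨ a = q ∨ a = r) → (b = p ∨ b = q ∨ b = r) → a ≠ b →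
      c s(a, y3) = 2 → c s(b, x3) = 2 → False :=
    fun a b ha hb hab c1 c2 => F3 b a hb ha hab.symm c2 c1
  have g12 : ∀ z z', (z = x1 ∨ z = y1) → (z' = y2 ∨ z' = x2) → z ≠ z' :=
    fun z z' hz hz' => h12 z z' hz hz'.symm
  have g12' : ∀ z z', (z = y1 ∨ z = x1) → (z' = x2 ∨ z' = y2) → z ≠ z' :=
    fun z z' hz hz' => h12 z z' hz.symm hz'
  have g12'' : ∀ z z', (z = y1 ∨ z = x1) → (z' = y2 ∨ z' = x2) → z ≠ z' :=
    fun z z' hz hz' => h12 z z' hz.symm hz'.symm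
  have g13 : ∀ z z', (z = x1 ∨ z = y1) → (z' = y3 ∨ z' = x3) → z ≠ z' :=
    fun z z' hz hz' => h13 z z' hz hz'.symm
  have g13' : ∀ z z', (z = y1 ∨ z = x1) → (z' = x3 ∨ z' = y3) → z ≠ z' :=
    fun z z' hz hz' => h13 z z' hz.symm hz'
  have g13'' : ∀ z z', (z = y1 ∨ z = x1) → (z' = y3 ∨ z' = x3) → z ≠ z' :=
    fun z z' hz hz' => h13 z z' hz.symm hz'.symm
  have g23 : ∀ z z', (z = x2 ∨ z = y2) → (z' = y3 ∨ z' = x3) → z ≠ z' :=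
    fun z z' hz hz' => h23 z z' hz hz'.symm
  have g23' : ∀ z z', (z = y2 ∨ z = x2) → (z' = x3 ∨ z' = y3) → z ≠ z' :=
    fun z z' hz hz' => h23 z z' hz.symm hz'
  have g23'' : ∀ z z', (z = y2 ∨ z = x2) → (z' = y3 ∨ z' = x3) → z ≠ z' :=
    fun z z' hz hz' => h23 z z' hz.symm hz'.symm
  have X1 : ∀ z, (z = x1 ∨ z = y1) → ∀ z', (z' = x2 ∨ z' = y2) → z ≠ z' := fun z hz z' hz' => h12 z z' hz hz'
  clear X1
  rcases hp1 with h1 | h1 <;> rcases hp2 with h2 | h2 <;> rcases hq3 with h3 | h3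
  · exact configB hP3 hP4 p q r x1 y1 x2 y2 x3 y3 hadjA hpq hpr hqr
      (h12 _ _ (Or.inl rfl) (Or.inl rfl)) (h12 _ _ (Or.inl rfl) (Or.inr rfl))
      (h13 _ _ (Or.inl rfl) (Or.inr rfl))
      (h12 _ _ (Or.inr rfl) (Or.inr rfl)) (h12 _ _ (Or.inr rfl) (Or.inl rfl))
      (h13 _ _ (Or.inr rfl) (Or.inl rfl))
      (h23 _ _ (Or.inl rfl) (Or.inl rfl)) (h23 _ _ (Or.inr rfl) (Or.inr rfl))
      F1 F2 F3 h1 h2 h3 hq1 hr2 hr3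
  · exact configB hP3 hP4 p q r x1 y1 x2 y2 y3 x3
      (fun a b ha hb => hadjA a b ha (or6p56 hb)) hpq hpr hqr
      (h12 _ _ (Or.inl rfl) (Or.inl rfl)) (h12 _ _ (Or.inl rfl) (Or.inr rfl))
      (h13 _ _ (Or.inl rfl) (Or.inl rfl))
      (h12 _ _ (Or.inr rfl) (Or.inr rfl)) (h12 _ _ (Or.inr rfl) (Or.inl rfl))
      (h13 _ _ (Or.inr rfl) (Or.inr rfl))
      (g23 _ _ (Or.inl rfl) (Or.inl rfl)) (g23 _ _ (Or.inr rfl) (Or.inr rfl))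
      F1 F2 F3' h1 h2 h3 hq1 hr2 hr3.symm
  · exact configB hP3 hP4 p q r x1 y1 y2 x2 x3 y3
      (fun a b ha hb => hadjA a b ha (or6p34 hb)) hpq hpr hqr
      (h12 _ _ (Or.inl rfl) (Or.inr rfl)) (h12 _ _ (Or.inl rfl) (Or.inl rfl))
      (h13 _ _ (Or.inl rfl) (Or.inr rfl))
      (h12 _ _ (Or.inr rfl) (Or.inl rfl)) (h12 _ _ (Or.inr rfl) (Or.inr rfl))
      (h13 _ _ (Or.inr rfl) (Or.inl rfl))
      (g23' _ _ (Or.inl rfl) (Or.inl rfl)) (g23' _ _ (Or.inr rfl) (Or.inr rfl))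
      F1 F2' F3 h1 h2 h3 hq1 hr2.symm hr3
  · exact configB hP3 hP4 p q r x1 y1 y2 x2 y3 x3
      (fun a b ha hb => hadjA a b ha (or6p56 (or6p34 hb))) hpq hpr hqr
      (h12 _ _ (Or.inl rfl) (Or.inr rfl)) (h12 _ _ (Or.inl rfl) (Or.inl rfl))
      (h13 _ _ (Or.inl rfl) (Or.inl rfl))
      (h12 _ _ (Or.inr rfl) (Or.inl rfl)) (h12 _ _ (Or.inr rfl) (Or.inr rfl))
      (h13 _ _ (Or.inr rfl) (Or.inr rfl))
      (g23'' _ _ (Or.inl rfl) (Or.inl rfl)) (g23'' _ _ (Or.inr rfl) (Or.inr rfl))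
      F1 F2' F3' h1 h2 h3 hq1 hr2.symm hr3.symm
  · exact configB hP3 hP4 p q r y1 x1 x2 y2 x3 y3
      (fun a b ha hb => hadjA a b ha (or6p12 hb)) hpq hpr hqr
      (g12' _ _ (Or.inl rfl) (Or.inl rfl)) (g12' _ _ (Or.inl rfl) (Or.inr rfl))
      (g13' _ _ (Or.inl rfl) (Or.inr rfl))
      (g12' _ _ (Or.inr rfl) (Or.inr rfl)) (g12' _ _ (Or.inr rfl) (Or.inl rfl))
      (g13' _ _ (Or.inr rfl) (Or.inl rfl))
      (h23 _ _ (Or.inl rfl) (Or.inl rfl)) (h23 _ _ (Or.inr rfl) (Or.inr rfl))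
      F1' F2 F3 h1 h2 h3 hq1.symm hr2 hr3
  · exact configB hP3 hP4 p q r y1 x1 x2 y2 y3 x3
      (fun a b ha hb => hadjA a b ha (or6p56 (or6p12 hb))) hpq hpr hqr
      (g12' _ _ (Or.inl rfl) (Or.inl rfl)) (g12' _ _ (Or.inl rfl) (Or.inr rfl))
      (g13' _ _ (Or.inl rfl) (Or.inl rfl))
      (g12' _ _ (Or.inr rfl) (Or.inr rfl)) (g12' _ _ (Or.inr rfl) (Or.inl rfl))
      (g13' _ _ (Or.inr rfl) (Or.inr rfl))
      (g23 _ _ (Or.inl rfl) (Or.inl rfl)) (g23 _ _ (Or.inr rfl) (Or.inr rfl))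
      F1' F2 F3' h1 h2 h3 hq1.symm hr2 hr3.symm
  · exact configB hP3 hP4 p q r y1 x1 y2 x2 x3 y3
      (fun a b ha hb => hadjA a b ha (or6p34 (or6p12 hb))) hpq hpr hqr
      (g12'' _ _ (Or.inl rfl) (Or.inl rfl)) (g12'' _ _ (Or.inl rfl) (Or.inr rfl))
      (g13' _ _ (Or.inl rfl) (Or.inr rfl))
      (g12'' _ _ (Or.inr rfl) (Or.inr rfl)) (g12'' _ _ (Or.inr rfl) (Or.inl rfl))
      (g13' _ _ (Or.inr rfl) (Or.inl rfl))
      (g23' _ _ (Or.inl rfl) (Or.inl rfl)) (g23' _ _ (Or.inr rfl) (Or.inr rfl))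
      F1' F2' F3 h1 h2 h3 hq1.symm hr2.symm hr3
  · exact configB hP3 hP4 p q r y1 x1 y2 x2 y3 x3
      (fun a b ha hb => hadjA a b ha (or6p56 (or6p34 (or6p12 hb)))) hpq hpr hqr
      (g12'' _ _ (Or.inl rfl) (Or.inl rfl)) (g12'' _ _ (Or.inl rfl) (Or.inr rfl))
      (g13'' _ _ (Or.inl rfl) (Or.inr rfl))
      (g12'' _ _ (Or.inr rfl) (Or.inr rfl)) (g12'' _ _ (Or.inr rfl) (Or.inl rfl))
      (g13'' _ _ (Or.inr rfl) (Or.inl rfl))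
      (g23'' _ _ (Or.inl rfl) (Or.inl rfl)) (g23'' _ _ (Or.inr rfl) (Or.inr rfl))
      F1' F2' F3' h1 h2 h3 hq1.symm hr2.symm hr3.symm

lemma twoOfThree {A B C : Prop} (h1 : A ∨ B) (h2 : A ∨ C) (h3 : B ∨ C) :
    (B ∧ C) ∨ (A ∧ C) ∨ (A ∧ B) := by tauto

lemma dispatch3 {γ δ : Type*} (P : γ → δ → Prop) (p q r : γ) (e1 e2 e3 : δ)
    (h1 : (P q e1 ∧ P r e1) ∨ (P p e1 ∧ P r e1) ∨ (P p e1 ∧ P q e1))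
    (h2 : (P q e2 ∧ P r e2) ∨ (P p e2 ∧ P r e2) ∨ (P p e2 ∧ P q e2))
    (h3 : (P q e3 ∧ P r e3) ∨ (P p e3 ∧ P r e3) ∨ (P p e3 ∧ P q e3)) :
    (P p e1 ∧ P p e2 ∧ P q e1 ∧ P q e2) ∨ (P p e1 ∧ P p e2 ∧ P r e1 ∧ P r e2) ∨
    (P q e1 ∧ P q e2 ∧ P r e1 ∧ P r e2) ∨
    (P p e1 ∧ P p e3 ∧ P q e1 ∧ P q e3) ∨ (P p e1 ∧ P p e3 ∧ P r e1 ∧ P r e3) ∨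
    (P q e1 ∧ P q e3 ∧ P r e1 ∧ P r e3) ∨
    (P p e2 ∧ P p e3 ∧ P q e2 ∧ P q e3) ∨ (P p e2 ∧ P p e3 ∧ P r e2 ∧ P r e3) ∨
    (P q e2 ∧ P q e3 ∧ P r e2 ∧ P r e3) ∨
    (P p e1 ∧ P p e2 ∧ P q e1 ∧ P q e3 ∧ P r e2 ∧ P r e3) ∨
    (P p e1 ∧ P p e2 ∧ P r e1 ∧ P r e3 ∧ P q e2 ∧ P q e3) ∨
    (P q e1 ∧ P q e2 ∧ P p e1 ∧ P p e3 ∧ P r e2 ∧ P r e3) ∨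
    (P q e1 ∧ P q e2 ∧ P r e1 ∧ P r e3 ∧ P p e2 ∧ P p e3) ∨
    (P r e1 ∧ P r e2 ∧ P p e1 ∧ P p e3 ∧ P q e2 ∧ P q e3) ∨
    (P r e1 ∧ P r e2 ∧ P q e1 ∧ P q e3 ∧ P p e2 ∧ P p e3) := by
  rcases h1 with ⟨a1, b1⟩ | ⟨a1, b1⟩ | ⟨a1, b1⟩ <;>
    rcases h2 with ⟨a2, b2⟩ | ⟨a2, b2⟩ | ⟨a2, b2⟩ <;>
    rcases h3 with ⟨a3, b3⟩ | ⟨a3, b3⟩ | ⟨a3, b3⟩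
  · exact Or.inr (Or.inr (Or.inl ⟨a1, a2, b1, b2⟩))
  · exact Or.inr (Or.inr (Or.inl ⟨a1, a2, b1, b2⟩))
  · exact Or.inr (Or.inr (Or.inl ⟨a1, a2, b1, b2⟩))
  · exact Or.inr (Or.inr (Or.inr (Or.inr (Or.inr (Or.inl ⟨a1, a3, b1, b3⟩)))))
  · exact Or.inr (Or.inr (Or.inr (Or.inr (Or.inr (Or.inr (Or.inr (Or.inl ⟨a2, a3, b2, b3⟩)))))))
  · exact Or.inr (Or.inr (Or.inr (Or.inr (Or.inr (Or.inr (Or.inr (Or.inr (Or.inr (Or.inr (Or.inr (Or.inr (Or.inr (Or.inr (⟨b1, b2, a1, b3, a2, a3⟩))))))))))))))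
  · exact Or.inr (Or.inr (Or.inr (Or.inr (Or.inr (Or.inl ⟨a1, a3, b1, b3⟩)))))
  · exact Or.inr (Or.inr (Or.inr (Or.inr (Or.inr (Or.inr (Or.inr (Or.inr (Or.inr (Or.inr (Or.inr (Or.inr (Or.inl ⟨a1, b2, b1, b3, a2, a3⟩))))))))))))
  · exact Or.inr (Or.inr (Or.inr (Or.inr (Or.inr (Or.inr (Or.inl ⟨a2, a3, b2, b3⟩))))))
  · exact Or.inr (Or.inr (Or.inr (Or.inr (Or.inr (Or.inr (Or.inr (Or.inr (Or.inl ⟨a2, a3, b2, b3⟩))))))))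
  · exact Or.inr (Or.inr (Or.inr (Or.inr (Or.inl ⟨a1, a3, b1, b3⟩))))
  · exact Or.inr (Or.inr (Or.inr (Or.inr (Or.inr (Or.inr (Or.inr (Or.inr (Or.inr (Or.inr (Or.inr (Or.inr (Or.inr (Or.inl ⟨b1, b2, a1, a3, a2, b3⟩)))))))))))))
  · exact Or.inr (Or.inl ⟨a1, a2, b1, b2⟩)
  · exact Or.inr (Or.inl ⟨a1, a2, b1, b2⟩)
  · exact Or.inr (Or.inl ⟨a1, a2, b1, b2⟩)
  · exact Or.inr (Or.inr (Or.inr (Or.inr (Or.inr (Or.inr (Or.inr (Or.inr (Or.inr (Or.inr (Or.inl ⟨a1, a2, b1, b3, b2, a3⟩))))))))))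
  · exact Or.inr (Or.inr (Or.inr (Or.inr (Or.inl ⟨a1, a3, b1, b3⟩))))
  · exact Or.inr (Or.inr (Or.inr (Or.inr (Or.inr (Or.inr (Or.inl ⟨a2, a3, b2, b3⟩))))))
  · exact Or.inr (Or.inr (Or.inr (Or.inr (Or.inr (Or.inr (Or.inr (Or.inr (Or.inl ⟨a2, a3, b2, b3⟩))))))))
  · exact Or.inr (Or.inr (Or.inr (Or.inr (Or.inr (Or.inr (Or.inr (Or.inr (Or.inr (Or.inr (Or.inr (Or.inl ⟨b1, a2, a1, a3, b2, b3⟩)))))))))))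
  · exact Or.inr (Or.inr (Or.inr (Or.inl ⟨a1, a3, b1, b3⟩)))
  · exact Or.inr (Or.inr (Or.inr (Or.inr (Or.inr (Or.inr (Or.inr (Or.inr (Or.inr (Or.inl ⟨a1, a2, b1, a3, b2, b3⟩)))))))))
  · exact Or.inr (Or.inr (Or.inr (Or.inr (Or.inr (Or.inr (Or.inr (Or.inl ⟨a2, a3, b2, b3⟩)))))))
  · exact Or.inr (Or.inr (Or.inr (Or.inl ⟨a1, a3, b1, b3⟩)))
  · exact Or.inl ⟨a1, a2, b1, b2⟩
  · exact Or.inl ⟨a1, a2, b1, b2⟩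
  · exact Or.inl ⟨a1, a2, b1, b2⟩

end Pure

set_option maxHeartbeats 1600000 in
lemma key (j t n : ℕ) (hj : 4 ≤ j) (hn : 2 ≤ n) (hjt : 2 * n + 1 ≤ j * t)
    (c : Sym2 (Fin j × Fin t) → Fin 3)
    (h0 : ¬ Contains (colorClass (multiK j t) c 0) (pathGraph 3))
    (h1 : ¬ Contains (colorClass (multiK j t) c 1) (pathGraph 4))
    (h2 : ¬ Contains (colorClass (multiK j t) c 2) (stripe n))
    (f : Fin (n - 1) × Fin 2 → Fin j × Fin t)
    (hf : Function.Injective f)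
    (hadjf : ∀ i : Fin (n - 1), (colorClass (multiK j t) c 2).Adj (f (i, 0)) (f (i, 1))) :
    False := by
  classical
  have hP3 : P3fact (multiK j t) c := fun v x y hvx hvy hxy c1 c2 =>
    h0 (containsP3 ⟨hvx.symm, (csymm c x v).trans c1⟩ ⟨hvy, c2⟩ hxy)
  have hP4 : P4fact (multiK j t) c := fun a b d e ha hb hd had hbe hae e1 e2 e3 =>
    h1 (containsP4 ⟨ha, e1⟩ ⟨hb, e2⟩ ⟨hd, e3⟩ had hbe hae)
  have hsucc : n - 1 + 1 = n := by omega
  have noStr : ¬ Contains (colorClass (multiK j t) c 2) (stripe (n - 1 + 1)) := by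
    rw [hsucc]; exact h2
  set U : Finset (Fin j × Fin t) := Finset.univ \ Finset.univ.image f with hUdef
  have hfree : ∀ u ∈ U, ∀ p, f p ≠ u := by
    intro u hu p hp
    rw [hUdef, Finset.mem_sdiff] at hu
    exact hu.2 (Finset.mem_image.mpr ⟨p, Finset.mem_univ _, hp⟩)
  have hUf : ∀ u ∈ U, ∀ p, u ≠ f p := fun u hu p => (hfree u hu p).symm
  have mkA : ∀ x y : Fin j × Fin t, x.1 ≠ y.1 → (multiK j t).Adj x y := fun _ _ h => h
  have fact1 : ∀ u v, u ∈ U → v ∈ U → (multiK j t).Adj u v → c s(u, v) = 2 → False :=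
    fun u v hu hv ha hc =>
      noStr (stripeAppend f hf hadjf ⟨ha, hc⟩ (hfree u hu) (hfree v hv))
  have fact2 : ∀ (i : Fin (n - 1)) u v, u ∈ U → v ∈ U → u ≠ v →
      (multiK j t).Adj u (f (i, 0)) → (multiK j t).Adj v (f (i, 1)) →
      c s(u, f (i, 0)) = 2 → c s(v, f (i, 1)) = 2 → False :=
    fun i u v hu hv huv a1 a2 c1 c2 =>
      noStr (stripeSwap f hf hadjf i huv (hfree u hu) (hfree v hv) ⟨a1, c1⟩ ⟨a2, c2⟩)
  have hcol01 : ∀ u v, u ∈ U → v ∈ U → (multiK j t).Adj u v →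
      c s(u, v) = 0 ∨ c s(u, v) = 1 := by
    intro u v hu hv ha
    rcases fin3all (c s(u, v)) with h | h | h
    · exact Or.inl h
    · exact Or.inr h
    · exact (fact1 u v hu hv ha h).elim
  have hdiff : ∀ (p q : Fin (n - 1) × Fin 2), p ≠ q → f p ≠ f q :=
    fun p q hpq h => hpq (hf h)
  have h01 : ∀ i : Fin (n - 1), f (i, 0) ≠ f (i, 1) := by
    intro i h
    have h2' : (0 : Fin 2) = 1 := congrArg Prod.snd (hf h)
    exact absurd h2' (by decide)
  have hUcard : U.card + 2 * (n - 1) = j * t := by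
    have himg : (Finset.univ.image f).card = 2 * (n - 1) := by
      rw [Finset.card_image_of_injective _ hf]
      simp [Finset.card_univ]
      omega
    have hle' : (Finset.univ.image f).card ≤ (Finset.univ : Finset (Fin j × Fin t)).card :=
      Finset.card_le_card (Finset.subset_univ _)
    have huniv : (Finset.univ : Finset (Fin j × Fin t)).card = j * t := by
      simp [Finset.card_univ]
    rw [hUdef, Finset.card_sdiff_of_subset (Finset.subset_univ _), himg, huniv]
    rw [himg, huniv] at hle'
    omega
  have hU3 : 3 ≤ U.card := by omega
  set S : Finset (Fin j) := U.image Prod.fst with hSdef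
  by_cases hS3 : 3 ≤ S.card
  · -- U spans at least three parts
    obtain ⟨pa, pb, pc, hpa, hpb, hpc, hab, hac, hbc⟩ :=
      (Finset.two_lt_card_iff (s := S)).mp (by omega)
    obtain ⟨a, haU, ha1⟩ := Finset.mem_image.mp hpa
    obtain ⟨b, hbU, hb1⟩ := Finset.mem_image.mp hpb
    obtain ⟨cc, hcU, hc1⟩ := Finset.mem_image.mp hpc
    have qab : a.1 ≠ b.1 := by rw [ha1, hb1]; exact hab
    have qac : a.1 ≠ cc.1 := by rw [ha1, hc1]; exact hac
    have qbc : b.1 ≠ cc.1 := by rw [hb1, hc1]; exact hbc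
    have nab : a ≠ b := fun h => qab (congrArg Prod.fst h)
    have nac : a ≠ cc := fun h => qac (congrArg Prod.fst h)
    have nbc : b ≠ cc := fun h => qbc (congrArg Prod.fst h)
    by_cases hU4 : 4 ≤ U.card
    · -- K4-e case
      have hcard3 : ({a, b, cc} : Finset (Fin j × Fin t)).card ≤ 3 := by
        apply le_trans (Finset.card_insert_le _ _)
        apply Nat.succ_le_succ
        apply le_trans (Finset.card_insert_le _ _)
        simp
      have hsd : 1 ≤ (U \ {a, b, cc}).card := by
        have := Finset.le_card_sdiff ({a, b, cc} : Finset (Fin j × Fin t)) U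
        omega
      obtain ⟨d, hd⟩ := (Finset.card_pos (s := U \ {a, b, cc})).mp (by omega)
      have hdU : d ∈ U := (Finset.mem_sdiff.mp hd).1
      have hdnot := (Finset.mem_sdiff.mp hd).2
      have hda : d ≠ a := fun h => hdnot (by rw [h]; simp)
      have hdb : d ≠ b := fun h => hdnot (by rw [h]; simp)
      have hdc : d ≠ cc := fun h => hdnot (by rw [h]; simp)
      by_cases hq1 : d.1 = b.1
      · exact qLemma hP3 hP4 b d a cc
          (mkA _ _ qab.symm) (mkA _ _ qbc) (mkA _ _ (hq1 ▸ qab.symm)) (mkA _ _ (hq1 ▸ qbc))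
          (mkA _ _ qac) hdb.symm
          (hcol01 b a hbU haU (mkA _ _ qab.symm)) (hcol01 b cc hbU hcU (mkA _ _ qbc))
          (hcol01 d a hdU haU (mkA _ _ (hq1 ▸ qab.symm))) (hcol01 d cc hdU hcU (mkA _ _ (hq1 ▸ qbc)))
          (hcol01 a cc haU hcU (mkA _ _ qac))
      · by_cases hq2 : d.1 = cc.1
        · exact qLemma hP3 hP4 cc d a b
            (mkA _ _ qac.symm) (mkA _ _ qbc.symm) (mkA _ _ (hq2 ▸ qac.symm))
            (mkA _ _ (hq2 ▸ qbc.symm)) (mkA _ _ qab) hdc.symm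
            (hcol01 cc a hcU haU (mkA _ _ qac.symm)) (hcol01 cc b hcU hbU (mkA _ _ qbc.symm))
            (hcol01 d a hdU haU (mkA _ _ (hq2 ▸ qac.symm)))
            (hcol01 d b hdU hbU (mkA _ _ (hq2 ▸ qbc.symm)))
            (hcol01 a b haU hbU (mkA _ _ qab))
        · exact qLemma hP3 hP4 a d b cc
            (mkA _ _ qab) (mkA _ _ qac) (mkA _ _ hq1) (mkA _ _ hq2)
            (mkA _ _ qbc) hda.symm
            (hcol01 a b haU hbU (mkA _ _ qab)) (hcol01 a cc haU hcU (mkA _ _ qac))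
            (hcol01 d b hdU hbU (mkA _ _ hq1)) (hcol01 d cc hdU hcU (mkA _ _ hq2))
            (hcol01 b cc hbU hcU (mkA _ _ qbc))
    · -- triangle case : U.card = 3
      have hU3' : U.card = 3 := by omega
      have hJT : j * t = 2 * n + 1 := by omega
      have hodd : Odd j ∧ Odd t := Nat.odd_mul.mp (by rw [hJT]; exact ⟨n, by omega⟩)
      have hj5 : 5 ≤ j := by obtain ⟨k, hk⟩ := hodd.1; omega
      have h5t : 5 * t ≤ j * t := Nat.mul_le_mul_right t hj5
      have ht1 : 1 ≤ t := by
        rcases Nat.eq_zero_or_pos t with h | h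
        · rw [h, Nat.mul_zero] at hJT; omega
        · exact h
      have tri : ∀ s' m t' : Fin j × Fin t, s' ∈ U → m ∈ U → t' ∈ U →
          s'.1 ≠ m.1 → m.1 ≠ t'.1 → s'.1 ≠ t'.1 →
          c s(s', m) = 1 → c s(m, t') = 1 → False := by
        intro s' m t' hsU hmU htU qsm qmt qst hsm hmt
        set Pst : Finset (Fin j × Fin t) :=
          Finset.univ.filter (fun x => x.1 = s'.1 ∨ x.1 = t'.1) with hPstd
        have hPcard : Pst.card = 2 * t := by
          have : Pst = ({s'.1, t'.1} : Finset (Fin j)) ×ˢ Finset.univ := by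
            ext z
            simp [hPstd, Finset.mem_product]
          rw [this, Finset.card_product, Finset.card_pair qst]
          simp [Finset.card_univ]
        have hsub2 : ({s', t'} : Finset (Fin j × Fin t)) ⊆ Pst ∩ U := by
          intro z hz
          rcases Finset.mem_insert.mp hz with rfl | hz'
          · exact Finset.mem_inter.mpr ⟨by simp [hPstd], hsU⟩
          · rw [Finset.mem_singleton.mp hz']
            exact Finset.mem_inter.mpr ⟨by simp [hPstd], htU⟩
        have hc2 : 2 ≤ (Pst ∩ U).card := by
          have h2' : ({s', t'} : Finset (Fin j × Fin t)).card = 2 :=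
            Finset.card_pair (fun h => qst (congrArg Prod.fst h))
          rw [← h2']
          exact Finset.card_le_card hsub2
        have hsdiff : (Pst \ U).card + 2 ≤ 2 * t := by
          have := Finset.card_inter_add_card_sdiff Pst U
          omega
        set EB : Finset (Fin (n - 1)) :=
          Finset.univ.filter (fun i => f (i, 0) ∈ Pst ∨ f (i, 1) ∈ Pst) with hEBd
        have hEBcard : EB.card ≤ (Pst \ U).card := by
          apply Finset.card_le_card_of_injOn
            (fun i => if f (i, 0) ∈ Pst then f (i, 0) else f (i, 1))
          · intro i hi
            rw [hEBd, Finset.mem_coe, Finset.mem_filter] at hi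
            by_cases hc' : f (i, 0) ∈ Pst
            · simp only [if_pos hc', Finset.mem_coe]
              refine Finset.mem_sdiff.mpr ⟨hc', fun hmem => hfree _ hmem (i, 0) rfl⟩
            · simp only [if_neg hc', Finset.mem_coe]
              refine Finset.mem_sdiff.mpr ⟨hi.2.resolve_left hc',
                fun hmem => hfree _ hmem (i, 1) rfl⟩
          · intro i hi i' hi' heq
            dsimp only at heq
            have hex : ∃ (b b' : Fin 2), f (i, b) = f (i', b') := by
              by_cases hc' : f (i, 0) ∈ Pst <;> by_cases hc'' : f (i', 0) ∈ Pst
              · exact ⟨0, 0, by rwa [if_pos hc', if_pos hc''] at heq⟩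
              · exact ⟨0, 1, by rwa [if_pos hc', if_neg hc''] at heq⟩
              · exact ⟨1, 0, by rwa [if_neg hc', if_pos hc''] at heq⟩
              · exact ⟨1, 1, by rwa [if_neg hc', if_neg hc''] at heq⟩
            obtain ⟨bb, bb', hbb⟩ := hex
            exact congrArg Prod.fst (hf hbb)
        have hsplit := Finset.card_filter_add_card_filter_not
          (s := (Finset.univ : Finset (Fin (n - 1))))
          (p := fun i => f (i, 0) ∈ Pst ∨ f (i, 1) ∈ Pst)
        have huniv' : (Finset.univ : Finset (Fin (n - 1))).card = n - 1 := by simp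
        have hEGpos : 0 < (Finset.univ.filter
            (fun i => ¬(f (i, 0) ∈ Pst ∨ f (i, 1) ∈ Pst))).card := by
          rw [hEBd] at hEBcard
          omega
        obtain ⟨i, hi⟩ := Finset.card_pos.mp hEGpos
        have hi' := (Finset.mem_filter.mp hi).2
        have hx : f (i, 0) ∉ Pst := fun h => hi' (Or.inl h)
        have hy : f (i, 1) ∉ Pst := fun h => hi' (Or.inr h)
        have hxs : (f (i, 0)).1 ≠ s'.1 ∧ (f (i, 0)).1 ≠ t'.1 := by
          rw [hPstd] at hx
          simpa using hx
        have hys : (f (i, 1)).1 ≠ s'.1 ∧ (f (i, 1)).1 ≠ t'.1 := by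
          rw [hPstd] at hy
          simpa using hy
        refine triangleLemma hP3 hP4 s' m t' (f (i, 0)) (f (i, 1))
          (mkA _ _ hxs.1.symm) (mkA _ _ hys.1.symm) (mkA _ _ hxs.2.symm) (mkA _ _ hys.2.symm)
          (mkA _ _ qsm) (mkA _ _ qmt)
          (fun h => qst (congrArg Prod.fst h)) (h01 i)
          ((hUf m hmU (i, 0)).symm) ((hUf m hmU (i, 1)).symm)
          hsm hmt ?_
        intro u v hu' hv' huv c1 c2
        have huU : u ∈ U := by rcases hu' with rfl | rfl <;> assumption
        have hvU : v ∈ U := by rcases hv' with rfl | rfl <;> assumption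
        have hax : (multiK j t).Adj u (f (i, 0)) := by
          rcases hu' with rfl | rfl
          · exact mkA _ _ hxs.1.symm
          · exact mkA _ _ hxs.2.symm
        have hay : (multiK j t).Adj v (f (i, 1)) := by
          rcases hv' with rfl | rfl
          · exact mkA _ _ hys.1.symm
          · exact mkA _ _ hys.2.symm
        exact fact2 i u v huU hvU huv hax hay c1 c2
      rcases hcol01 a b haU hbU (mkA _ _ qab) with hab1 | hab1 <;>
        rcases hcol01 a cc haU hcU (mkA _ _ qac) with hac1 | hac1 <;>
        rcases hcol01 b cc hbU hcU (mkA _ _ qbc) with hbc1 | hbc1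
      · exact hP3 a b cc (mkA _ _ qab) (mkA _ _ qac) nbc hab1 hac1
      · exact hP3 a b cc (mkA _ _ qab) (mkA _ _ qac) nbc hab1 hac1
      · exact hP3 b a cc (mkA _ _ qab.symm) (mkA _ _ qbc) nac
          ((csymm c b a).trans hab1) hbc1
      · exact tri a cc b haU hcU hbU qac qbc.symm qab hac1 ((csymm c cc b).trans hbc1)
      · exact hP3 cc a b (mkA _ _ qac.symm) (mkA _ _ qbc.symm) nab
          ((csymm c cc a).trans hac1) ((csymm c cc b).trans hbc1)
      · exact tri a b cc haU hbU hcU qab qbc qac hab1 hbc1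
      · exact tri b a cc hbU haU hcU qab.symm qac qbc ((csymm c b a).trans hab1) hac1
      · exact tri a b cc haU hbU hcU qab qbc qac hab1 hbc1
  · -- U spans at most two parts
    push_neg at hS3
    have hUne : U.Nonempty := Finset.card_pos.mp (by omega)
    have hSne : S.Nonempty := hUne.image _
    obtain ⟨p1, hp1S⟩ := hSne
    have hexp2 : ∃ p2 : Fin j, p1 ≠ p2 ∧ ∀ u ∈ U, u.1 = p1 ∨ u.1 = p2 := by
      by_cases hS1 : S.card ≤ 1
      · obtain ⟨p2, hp2⟩ := Fintype.exists_ne_of_one_lt_card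
          (α := Fin j) (by simpa using (by omega : 1 < j)) p1
        refine ⟨p2, hp2.symm, fun u hu => Or.inl ?_⟩
        exact Finset.card_le_one.mp hS1 _ (Finset.mem_image_of_mem _ hu) _ hp1S
      · have h2' : S.card = 2 := by omega
        obtain ⟨x, y, hxy, hSxy⟩ := Finset.card_eq_two.mp h2'
        have hcov' : ∀ u ∈ U, u.1 = x ∨ u.1 = y := by
          intro u hu
          have hm' : u.1 ∈ S := Finset.mem_image_of_mem _ hu
          rw [hSxy] at hm'
          simpa using hm'
        have hp1' : p1 = x ∨ p1 = y := by
          rw [hSxy] at hp1S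
          simpa using hp1S
        rcases hp1' with rfl | rfl
        · exact ⟨y, hxy, hcov'⟩
        · exact ⟨x, hxy.symm, fun u hu => (hcov' u hu).symm⟩
    obtain ⟨p2, hp12, hcov⟩ := hexp2
    set P12 : Finset (Fin j × Fin t) :=
      Finset.univ.filter (fun x => x.1 = p1 ∨ x.1 = p2) with hP12d
    have hP12card : P12.card = 2 * t := by
      have hp : P12 = ({p1, p2} : Finset (Fin j)) ×ˢ Finset.univ := by
        ext z
        simp [hP12d, Finset.mem_product]
      rw [hp, Finset.card_product, Finset.card_pair hp12]
      simp [Finset.card_univ]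
    have hUP12 : U ⊆ P12 := by
      intro u hu
      simp only [hP12d, Finset.mem_filter, Finset.mem_univ, true_and]
      exact hcov u hu
    have hU2t : U.card ≤ 2 * t := hP12card ▸ Finset.card_le_card hUP12
    set EB : Finset (Fin (n - 1)) :=
      Finset.univ.filter (fun i => f (i, 0) ∈ P12 ∨ f (i, 1) ∈ P12) with hEBd
    set EG : Finset (Fin (n - 1)) :=
      Finset.univ.filter (fun i => ¬(f (i, 0) ∈ P12 ∨ f (i, 1) ∈ P12)) with hEGd
    have huniv' : (Finset.univ : Finset (Fin (n - 1))).card = n - 1 := by simp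
    have hsplit : EB.card + EG.card = n - 1 := by
      rw [hEBd, hEGd, Finset.card_filter_add_card_filter_not]
      exact huniv'
    have hEBbound : EB.card ≤ (P12 \ U).card := by
      rw [hEBd]
      apply Finset.card_le_card_of_injOn
        (fun i => if f (i, 0) ∈ P12 then f (i, 0) else f (i, 1))
      · intro i hi
        rw [Finset.mem_coe, Finset.mem_filter] at hi
        by_cases hc' : f (i, 0) ∈ P12
        · simp only [if_pos hc', Finset.mem_coe]
          exact Finset.mem_sdiff.mpr ⟨hc', fun hmem => hfree _ hmem (i, 0) rfl⟩
        · simp only [if_neg hc', Finset.mem_coe]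
          exact Finset.mem_sdiff.mpr ⟨hi.2.resolve_left hc',
            fun hmem => hfree _ hmem (i, 1) rfl⟩
      · intro i hi i' hi' heq
        dsimp only at heq
        have hex : ∃ (b b' : Fin 2), f (i, b) = f (i', b') := by
          by_cases hc' : f (i, 0) ∈ P12 <;> by_cases hc'' : f (i', 0) ∈ P12
          · exact ⟨0, 0, by rwa [if_pos hc', if_pos hc''] at heq⟩
          · exact ⟨0, 1, by rwa [if_pos hc', if_neg hc''] at heq⟩
          · exact ⟨1, 0, by rwa [if_neg hc', if_pos hc''] at heq⟩
          · exact ⟨1, 1, by rwa [if_neg hc', if_neg hc''] at heq⟩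
        obtain ⟨bb, bb', hbb⟩ := hex
        exact congrArg Prod.fst (hf hbb)
    have hsdc : (P12 \ U).card + U.card = 2 * t := by
      rw [Finset.card_sdiff_of_subset hUP12, hP12card]
      omega
    have hmul4 : 4 * t ≤ j * t := Nat.mul_le_mul_right t hj
    have hadjUE : ∀ z ∈ U, ∀ i ∈ EG, ∀ b : Fin 2, (multiK j t).Adj z (f (i, b)) := by
      intro z hz i hi b
      have hi' := (Finset.mem_filter.mp (hEGd ▸ hi)).2
      have hx : f (i, 0) ∉ P12 := fun h => hi' (Or.inl h)
      have hy : f (i, 1) ∉ P12 := fun h => hi' (Or.inr h)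
      have hx' : (f (i, 0)).1 ≠ p1 ∧ (f (i, 0)).1 ≠ p2 := by
        rw [hP12d] at hx
        simpa using hx
      have hy' : (f (i, 1)).1 ≠ p1 ∧ (f (i, 1)).1 ≠ p2 := by
        rw [hP12d] at hy
        simpa using hy
      apply mkA
      rcases hcov z hz with h | h <;> rw [h] <;> rcases fin2cases b with rfl | rfl
      · exact hx'.1.symm
      · exact hy'.1.symm
      · exact hx'.2.symm
      · exact hy'.2.symm
    have hpair : ∀ i ∈ EG, ∀ u v, u ∈ U → v ∈ U → u ≠ v →
        (c s(u, f (i, 0)) = 1 ∨ c s(u, f (i, 1)) = 1) ∨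
        (c s(v, f (i, 0)) = 1 ∨ c s(v, f (i, 1)) = 1) := by
      intro i hi u v hu hv huv
      have h4 := pairLemma hP3 u v (f (i, 0)) (f (i, 1)) (hadjUE u hu i hi 0)
        (hadjUE u hu i hi 1) (hadjUE v hv i hi 0) (hadjUE v hv i hi 1) huv (h01 i)
        (fun c1 c2 => fact2 i u v hu hv huv (hadjUE u hu i hi 0) (hadjUE v hv i hi 1) c1 c2)
        (fun c1 c2 => fact2 i v u hv hu huv.symm (hadjUE v hv i hi 0) (hadjUE u hu i hi 1) c1 c2)
      rcases h4 with h | h | h | h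
      · exact Or.inl (Or.inl h)
      · exact Or.inl (Or.inr h)
      · exact Or.inr (Or.inl h)
      · exact Or.inr (Or.inr h)
    have hcr : ∀ (i i' : Fin (n - 1)), i ≠ i' → ∀ z z',
        (z = f (i, 0) ∨ z = f (i, 1)) → (z' = f (i', 0) ∨ z' = f (i', 1)) → z ≠ z' := by
      intro i i' hii z z' hz hz'
      rcases hz with rfl | rfl <;> rcases hz' with rfl | rfl <;>
        exact hdiff _ _ (fun h => hii (congrArg Prod.fst h))
    have Fmk : ∀ (i : Fin (n - 1)), i ∈ EG → ∀ u v w : Fin j × Fin t,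
        u ∈ U → v ∈ U → w ∈ U →
        ∀ a b, (a = u ∨ a = v ∨ a = w) → (b = u ∨ b = v ∨ b = w) → a ≠ b →
        c s(a, f (i, 0)) = 2 → c s(b, f (i, 1)) = 2 → False := by
      intro i hi u v w hu hv hw a b ha hb hab c1 c2
      have haU : a ∈ U := by rcases ha with rfl | rfl | rfl <;> assumption
      have hbU : b ∈ U := by rcases hb with rfl | rfl | rfl <;> assumption
      exact fact2 i a b haU hbU hab (hadjUE a haU i hi 0) (hadjUE b hbU i hi 1) c1 c2
    have adjW : ∀ (u' v' w' : Fin j × Fin t), u' ∈ U → v' ∈ U → w' ∈ U →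
        ∀ (ia ib : Fin (n - 1)), ia ∈ EG → ib ∈ EG →
        ∀ a b, (a = u' ∨ a = v' ∨ a = w') →
        (b = f (ia, 0) ∨ b = f (ia, 1) ∨ b = f (ib, 0) ∨ b = f (ib, 1)) →
        (multiK j t).Adj a b := by
      intro u' v' w' hu' hv' hw' ia ib hia hib a b ha hb
      have haU : a ∈ U := by rcases ha with rfl | rfl | rfl <;> assumption
      rcases hb with rfl | rfl | rfl | rfl
      · exact hadjUE a haU ia hia 0
      · exact hadjUE a haU ia hia 1
      · exact hadjUE a haU ib hib 0
      · exact hadjUE a haU ib hib 1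
    by_cases hU4 : 4 ≤ U.card
    · -- at least four free vertices
      have hEG2 : 1 < EG.card := by omega
      obtain ⟨e1, he1, e2, he2, hee⟩ := Finset.one_lt_card.mp hEG2
      set M1 := U.filter (fun z => ¬(c s(z, f (e1, 0)) = 1 ∨ c s(z, f (e1, 1)) = 1)) with hM1d
      set M2 := U.filter (fun z => ¬(c s(z, f (e2, 0)) = 1 ∨ c s(z, f (e2, 1)) = 1)) with hM2d
      have hm1 : M1.card ≤ 1 := by
        by_contra hcon
        obtain ⟨z1, hz1, z2, hz2, hzz⟩ := (Finset.one_lt_card (s := M1)).mp (by omega)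
        rw [hM1d, Finset.mem_filter] at hz1 hz2
        rcases hpair e1 he1 z1 z2 hz1.1 hz2.1 hzz with h | h
        · exact hz1.2 h
        · exact hz2.2 h
      have hm2 : M2.card ≤ 1 := by
        by_contra hcon
        obtain ⟨z1, hz1, z2, hz2, hzz⟩ := (Finset.one_lt_card (s := M2)).mp (by omega)
        rw [hM2d, Finset.mem_filter] at hz1 hz2
        rcases hpair e2 he2 z1 z2 hz1.1 hz2.1 hzz with h | h
        · exact hz1.2 h
        · exact hz2.2 h
      have hDcard : 1 < ((U \ M1) \ M2).card := by
        have l1 := Finset.le_card_sdiff M1 U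
        have l2 := Finset.le_card_sdiff M2 (U \ M1)
        have l3 : (U \ M1).card ≤ U.card := Finset.card_le_card Finset.sdiff_subset
        omega
      obtain ⟨u, hu', v, hv', huv⟩ := Finset.one_lt_card.mp hDcard
      have huU : u ∈ U := (Finset.mem_sdiff.mp (Finset.mem_sdiff.mp hu').1).1
      have hvU : v ∈ U := (Finset.mem_sdiff.mp (Finset.mem_sdiff.mp hv').1).1
      have hu1 : c s(u, f (e1, 0)) = 1 ∨ c s(u, f (e1, 1)) = 1 := by
        have hn1 := (Finset.mem_sdiff.mp (Finset.mem_sdiff.mp hu').1).2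
        by_contra hcon
        exact hn1 (by rw [hM1d]; exact Finset.mem_filter.mpr ⟨huU, hcon⟩)
      have hu2 : c s(u, f (e2, 0)) = 1 ∨ c s(u, f (e2, 1)) = 1 := by
        have hn2 := (Finset.mem_sdiff.mp hu').2
        by_contra hcon
        exact hn2 (by rw [hM2d]; exact Finset.mem_filter.mpr ⟨huU, hcon⟩)
      have hv1 : c s(v, f (e1, 0)) = 1 ∨ c s(v, f (e1, 1)) = 1 := by
        have hn1 := (Finset.mem_sdiff.mp (Finset.mem_sdiff.mp hv').1).2
        by_contra hcon
        exact hn1 (by rw [hM1d]; exact Finset.mem_filter.mpr ⟨hvU, hcon⟩)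
      have hv2 : c s(v, f (e2, 0)) = 1 ∨ c s(v, f (e2, 1)) = 1 := by
        have hn2 := (Finset.mem_sdiff.mp hv').2
        by_contra hcon
        exact hn2 (by rw [hM2d]; exact Finset.mem_filter.mpr ⟨hvU, hcon⟩)
      have hwex : 0 < (U \ {u, v}).card := by
        have l1 := Finset.le_card_sdiff ({u, v} : Finset (Fin j × Fin t)) U
        have l2 : ({u, v} : Finset (Fin j × Fin t)).card ≤ 2 := by
          simpa using Finset.card_insert_le u ({v} : Finset (Fin j × Fin t))
        omega
      obtain ⟨w, hw'⟩ := Finset.card_pos.mp hwex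
      have hwU : w ∈ U := (Finset.mem_sdiff.mp hw').1
      have hwuv := (Finset.mem_sdiff.mp hw').2
      have hwu : u ≠ w := fun h => hwuv (by rw [← h]; simp)
      have hwv : v ≠ w := fun h => hwuv (by rw [← h]; simp)
      exact endgameW hP3 hP4 u v w (f (e1, 0)) (f (e1, 1)) (f (e2, 0)) (f (e2, 1))
        (adjW u v w huU hvU hwU e1 e2 he1 he2) huv hwu hwv (h01 e1) (h01 e2)
        (hcr e1 e2 hee) (Fmk e1 he1 u v w huU hvU hwU) (Fmk e2 he2 u v w huU hvU hwU)
        hu1 hu2 hv1 hv2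
    · -- exactly three free vertices
      have hU3' : U.card = 3 := by omega
      have hJT : j * t = 2 * n + 1 := by omega
      have hodd : Odd j ∧ Odd t := Nat.odd_mul.mp (by rw [hJT]; exact ⟨n, by omega⟩)
      have hj5 : 5 ≤ j := by obtain ⟨k, hk⟩ := hodd.1; omega
      have ht3 : 3 ≤ t := by obtain ⟨k, hk⟩ := hodd.2; omega
      have h5t : 5 * t ≤ j * t := Nat.mul_le_mul_right t hj5
      have hEG3 : 2 < EG.card := by omega
      obtain ⟨e1, e2, e3, he1, he2, he3, h12, h13, h23⟩ :=
        (Finset.two_lt_card_iff (s := EG)).mp hEG3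
      obtain ⟨p, q, r, hpq, hpr, hqr, hUeq⟩ := Finset.card_eq_three.mp hU3'
      have hpU : p ∈ U := by rw [hUeq]; simp
      have hqU : q ∈ U := by rw [hUeq]; simp
      have hrU : r ∈ U := by rw [hUeq]; simp
      have htwo : ∀ i ∈ EG,
          ((c s(q, f (i, 0)) = 1 ∨ c s(q, f (i, 1)) = 1) ∧
            (c s(r, f (i, 0)) = 1 ∨ c s(r, f (i, 1)) = 1)) ∨
          ((c s(p, f (i, 0)) = 1 ∨ c s(p, f (i, 1)) = 1) ∧
            (c s(r, f (i, 0)) = 1 ∨ c s(r, f (i, 1)) = 1)) ∨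
          ((c s(p, f (i, 0)) = 1 ∨ c s(p, f (i, 1)) = 1) ∧
            (c s(q, f (i, 0)) = 1 ∨ c s(q, f (i, 1)) = 1)) := by
        intro i hi
        have a1 := hpair i hi p q hpU hqU hpq
        have a2 := hpair i hi p r hpU hrU hpr
        have a3 := hpair i hi q r hqU hrU hqr
        exact twoOfThree a1 a2 a3
      have hdisp := dispatch3
        (fun z i => c s(z, f (i, 0)) = 1 ∨ c s(z, f (i, 1)) = 1) p q r e1 e2 e3
        (htwo e1 he1) (htwo e2 he2) (htwo e3 he3)
      have adjB : ∀ (u' v' w' : Fin j × Fin t), u' ∈ U → v' ∈ U → w' ∈ U →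
          ∀ a b, (a = u' ∨ a = v' ∨ a = w') →
          (b = f (e1, 0) ∨ b = f (e1, 1) ∨ b = f (e2, 0) ∨ b = f (e2, 1) ∨
            b = f (e3, 0) ∨ b = f (e3, 1)) →
          (multiK j t).Adj a b := by
        intro u' v' w' hu' hv' hw' a b ha hb
        have haU : a ∈ U := by rcases ha with rfl | rfl | rfl <;> assumption
        rcases hb with rfl | rfl | rfl | rfl | rfl | rfl
        · exact hadjUE a haU e1 he1 0
        · exact hadjUE a haU e1 he1 1
        · exact hadjUE a haU e2 he2 0
        · exact hadjUE a haU e2 he2 1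
        · exact hadjUE a haU e3 he3 0
        · exact hadjUE a haU e3 he3 1
      rcases hdisp with h | h | h | h | h | h | h | h | h | h | h | h | h | h | h
      · exact endgameW hP3 hP4 p q r (f (e1, 0)) (f (e1, 1)) (f (e2, 0)) (f (e2, 1))
          (adjW p q r hpU hqU hrU e1 e2 he1 he2) hpq hpr hqr (h01 e1) (h01 e2)
          (hcr e1 e2 h12) (Fmk e1 he1 p q r hpU hqU hrU) (Fmk e2 he2 p q r hpU hqU hrU)
          h.1 h.2.1 h.2.2.1 h.2.2.2
      · exact endgameW hP3 hP4 p r q (f (e1, 0)) (f (e1, 1)) (f (e2, 0)) (f (e2, 1))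
          (adjW p r q hpU hrU hqU e1 e2 he1 he2) hpr hpq hqr.symm (h01 e1) (h01 e2)
          (hcr e1 e2 h12) (Fmk e1 he1 p r q hpU hrU hqU) (Fmk e2 he2 p r q hpU hrU hqU)
          h.1 h.2.1 h.2.2.1 h.2.2.2
      · exact endgameW hP3 hP4 q r p (f (e1, 0)) (f (e1, 1)) (f (e2, 0)) (f (e2, 1))
          (adjW q r p hqU hrU hpU e1 e2 he1 he2) hqr hpq.symm hpr.symm (h01 e1) (h01 e2)
          (hcr e1 e2 h12) (Fmk e1 he1 q r p hqU hrU hpU) (Fmk e2 he2 q r p hqU hrU hpU)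
          h.1 h.2.1 h.2.2.1 h.2.2.2
      · exact endgameW hP3 hP4 p q r (f (e1, 0)) (f (e1, 1)) (f (e3, 0)) (f (e3, 1))
          (adjW p q r hpU hqU hrU e1 e3 he1 he3) hpq hpr hqr (h01 e1) (h01 e3)
          (hcr e1 e3 h13) (Fmk e1 he1 p q r hpU hqU hrU) (Fmk e3 he3 p q r hpU hqU hrU)
          h.1 h.2.1 h.2.2.1 h.2.2.2
      · exact endgameW hP3 hP4 p r q (f (e1, 0)) (f (e1, 1)) (f (e3, 0)) (f (e3, 1))
          (adjW p r q hpU hrU hqU e1 e3 he1 he3) hpr hpq hqr.symm (h01 e1) (h01 e3)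
          (hcr e1 e3 h13) (Fmk e1 he1 p r q hpU hrU hqU) (Fmk e3 he3 p r q hpU hrU hqU)
          h.1 h.2.1 h.2.2.1 h.2.2.2
      · exact endgameW hP3 hP4 q r p (f (e1, 0)) (f (e1, 1)) (f (e3, 0)) (f (e3, 1))
          (adjW q r p hqU hrU hpU e1 e3 he1 he3) hqr hpq.symm hpr.symm (h01 e1) (h01 e3)
          (hcr e1 e3 h13) (Fmk e1 he1 q r p hqU hrU hpU) (Fmk e3 he3 q r p hqU hrU hpU)
          h.1 h.2.1 h.2.2.1 h.2.2.2
      · exact endgameW hP3 hP4 p q r (f (e2, 0)) (f (e2, 1)) (f (e3, 0)) (f (e3, 1))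
          (adjW p q r hpU hqU hrU e2 e3 he2 he3) hpq hpr hqr (h01 e2) (h01 e3)
          (hcr e2 e3 h23) (Fmk e2 he2 p q r hpU hqU hrU) (Fmk e3 he3 p q r hpU hqU hrU)
          h.1 h.2.1 h.2.2.1 h.2.2.2
      · exact endgameW hP3 hP4 p r q (f (e2, 0)) (f (e2, 1)) (f (e3, 0)) (f (e3, 1))
          (adjW p r q hpU hrU hqU e2 e3 he2 he3) hpr hpq hqr.symm (h01 e2) (h01 e3)
          (hcr e2 e3 h23) (Fmk e2 he2 p r q hpU hrU hqU) (Fmk e3 he3 p r q hpU hrU hqU)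
          h.1 h.2.1 h.2.2.1 h.2.2.2
      · exact endgameW hP3 hP4 q r p (f (e2, 0)) (f (e2, 1)) (f (e3, 0)) (f (e3, 1))
          (adjW q r p hqU hrU hpU e2 e3 he2 he3) hqr hpq.symm hpr.symm (h01 e2) (h01 e3)
          (hcr e2 e3 h23) (Fmk e2 he2 q r p hqU hrU hpU) (Fmk e3 he3 q r p hqU hrU hpU)
          h.1 h.2.1 h.2.2.1 h.2.2.2
      · exact configBW hP3 hP4 p q r (f (e1, 0)) (f (e1, 1)) (f (e2, 0)) (f (e2, 1))
          (f (e3, 0)) (f (e3, 1)) (adjB p q r hpU hqU hrU) hpq hpr hqr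
          (hcr e1 e2 h12) (hcr e1 e3 h13) (hcr e2 e3 h23)
          (Fmk e1 he1 p q r hpU hqU hrU) (Fmk e2 he2 p q r hpU hqU hrU)
          (Fmk e3 he3 p q r hpU hqU hrU)
          h.1 h.2.1 h.2.2.2.1 h.2.2.1 h.2.2.2.2.1 h.2.2.2.2.2
      · exact configBW hP3 hP4 p r q (f (e1, 0)) (f (e1, 1)) (f (e2, 0)) (f (e2, 1))
          (f (e3, 0)) (f (e3, 1)) (adjB p r q hpU hrU hqU) hpr hpq hqr.symm
          (hcr e1 e2 h12) (hcr e1 e3 h13) (hcr e2 e3 h23)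
          (Fmk e1 he1 p r q hpU hrU hqU) (Fmk e2 he2 p r q hpU hrU hqU)
          (Fmk e3 he3 p r q hpU hrU hqU)
          h.1 h.2.1 h.2.2.2.1 h.2.2.1 h.2.2.2.2.1 h.2.2.2.2.2
      · exact configBW hP3 hP4 q p r (f (e1, 0)) (f (e1, 1)) (f (e2, 0)) (f (e2, 1))
          (f (e3, 0)) (f (e3, 1)) (adjB q p r hqU hpU hrU) hpq.symm hqr hpr
          (hcr e1 e2 h12) (hcr e1 e3 h13) (hcr e2 e3 h23)
          (Fmk e1 he1 q p r hqU hpU hrU) (Fmk e2 he2 q p r hqU hpU hrU)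
          (Fmk e3 he3 q p r hqU hpU hrU)
          h.1 h.2.1 h.2.2.2.1 h.2.2.1 h.2.2.2.2.1 h.2.2.2.2.2
      · exact configBW hP3 hP4 q r p (f (e1, 0)) (f (e1, 1)) (f (e2, 0)) (f (e2, 1))
          (f (e3, 0)) (f (e3, 1)) (adjB q r p hqU hrU hpU) hqr hpq.symm hpr.symm
          (hcr e1 e2 h12) (hcr e1 e3 h13) (hcr e2 e3 h23)
          (Fmk e1 he1 q r p hqU hrU hpU) (Fmk e2 he2 q r p hqU hrU hpU)
          (Fmk e3 he3 q r p hqU hrU hpU)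
          h.1 h.2.1 h.2.2.2.1 h.2.2.1 h.2.2.2.2.1 h.2.2.2.2.2
      · exact configBW hP3 hP4 r p q (f (e1, 0)) (f (e1, 1)) (f (e2, 0)) (f (e2, 1))
          (f (e3, 0)) (f (e3, 1)) (adjB r p q hrU hpU hqU) hpr.symm hqr.symm hpq
          (hcr e1 e2 h12) (hcr e1 e3 h13) (hcr e2 e3 h23)
          (Fmk e1 he1 r p q hrU hpU hqU) (Fmk e2 he2 r p q hrU hpU hqU)
          (Fmk e3 he3 r p q hrU hpU hqU)
          h.1 h.2.1 h.2.2.2.1 h.2.2.1 h.2.2.2.2.1 h.2.2.2.2.2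
      · exact configBW hP3 hP4 r q p (f (e1, 0)) (f (e1, 1)) (f (e2, 0)) (f (e2, 1))
          (f (e3, 0)) (f (e3, 1)) (adjB r q p hrU hqU hpU) hqr.symm hpr.symm hpq.symm
          (hcr e1 e2 h12) (hcr e1 e3 h13) (hcr e2 e3 h23)
          (Fmk e1 he1 r q p hrU hqU hpU) (Fmk e2 he2 r q p hrU hqU hpU)
          (Fmk e3 he3 r q p hrU hqU hpU)
          h.1 h.2.1 h.2.2.2.1 h.2.2.1 h.2.2.2.2.1 h.2.2.2.2.2

theorem stmt8 (j n : ℕ) (hj : 4 ≤ j) (hn : 2 ≤ n)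
    (h : IsLeast {t : ℕ | 0 < t ∧ Arrows3 j t (n - 1)} (2 * (n - 1) / j + 1)) :
    Arrows3 j (2 * n / j + 1) n := by
  intro c
  by_contra hcon
  push_neg at hcon
  obtain ⟨h0, h1, h2⟩ := hcon
  have hle : 2 * (n - 1) / j + 1 ≤ 2 * n / j + 1 := by
    have := Nat.div_le_div_right (c := j) (by omega : 2 * (n - 1) ≤ 2 * n)
    omega
  have hjpos : 0 < j := by omega
  have hjt : 2 * n + 1 ≤ j * (2 * n / j + 1) := by
    have hdm := Nat.div_add_mod (2 * n) j
    have hmod : 2 * n % j < j := Nat.mod_lt _ hjpos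
    have hmul : j * (2 * n / j + 1) = j * (2 * n / j) + j := by ring
    rw [hmul]
    omega
  set ι : Fin j × Fin (2 * (n - 1) / j + 1) → Fin j × Fin (2 * n / j + 1) :=
    fun x => (x.1, Fin.castLE hle x.2) with hιd
  have hιinj : Function.Injective ι := by
    intro a b hab
    have hab' : (a.1, Fin.castLE hle a.2) = (b.1, Fin.castLE hle b.2) := hab
    injection hab' with h1' h2'
    exact Prod.ext h1' (Fin.castLE_injective hle h2')
  have hιadj : ∀ (i : Fin 3) (a b : Fin j × Fin (2 * (n - 1) / j + 1)),
      (colorClass (multiK j (2 * (n - 1) / j + 1)) (fun e => c (Sym2.map ι e)) i).Adj a b →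
      (colorClass (multiK j (2 * n / j + 1)) c i).Adj (ι a) (ι b) := by
    intro i a b hab
    refine ⟨hab.1, ?_⟩
    rw [hιd]
    rw [← Sym2.map_pair_eq ι]
    exact hab.2
  obtain hA | hB | hC := h.1.2 (fun e => c (Sym2.map ι e))
  · exact h0 (Contains.comp ι hιinj (fun a b hab => hιadj 0 a b hab) hA)
  · exact h1 (Contains.comp ι hιinj (fun a b hab => hιadj 1 a b hab) hB)
  · obtain ⟨g, hg, hgadj⟩ := hC
    refine key j (2 * n / j + 1) n hj hn hjt c h0 h1 h2 (ι ∘ g) (hιinj.comp hg) ?_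
    intro i
    have hstr : (stripe (n - 1)).Adj (i, 0) (i, 1) := by
      refine ⟨rfl, ?_⟩
      show (0 : Fin 2) ≠ 1
      decide
    have hs := hgadj hstr
    exact hιadj 2 _ _ hs
end

section
/- For n ∈ {2, 3}, the size multipartite Ramsey number m_3(nK_2, C_7) equals 3. That is, every 2-coloring of the edges of K_{3×3} contains a matching nK_2 in the first color or a cycle C_7 in the second color, and there is a 2-coloring of the edges of K_{3×2} containing neither. -/
open SimpleGraph

/-! ### Auxiliary definitions and lemmas -/

abbrev V3 := Fin 3 × Fin 3

/-- The red graph (color 0) of a 2-coloring. -/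
def Rd (c : Sym2 V3 → Fin 2) (a b : V3) : Prop := a.1 ≠ b.1 ∧ c s(a, b) = 0

/-- Existence of 2 disjoint red edges. -/
def M2 (c : Sym2 V3 → Fin 2) : Prop :=
  ∃ p q r s : V3, Rd c p q ∧ Rd c r s ∧ p ≠ r ∧ p ≠ s ∧ q ≠ r ∧ q ≠ s

/-- Existence of 3 disjoint red edges. -/
def M3 (c : Sym2 V3 → Fin 2) : Prop :=
  ∃ p q r s t u : V3, Rd c p q ∧ Rd c r s ∧ Rd c t u ∧
    p ≠ r ∧ p ≠ s ∧ p ≠ t ∧ p ≠ u ∧ q ≠ r ∧ q ≠ s ∧ q ≠ t ∧ q ≠ u ∧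
    r ≠ t ∧ r ≠ u ∧ s ≠ t ∧ s ≠ u

def notS (a b c d x : V3) : Prop := x ≠ a ∧ x ≠ b ∧ x ≠ c ∧ x ≠ d

instance (a b c d x : V3) : Decidable (notS a b c d x) := by
  unfold notS; infer_instance

lemma fin2 : ∀ i : Fin 2, i ≠ 0 → i = 1 := by decide

lemma neP {a b : V3} (h : a.1 ≠ b.1) : a ≠ b := fun he => h (by rw [he])

lemma Rd_symm {c : Sym2 V3 → Fin 2} {a b : V3} (h : Rd c a b) : Rd c b a :=
  ⟨h.1.symm, by rw [Sym2.eq_swap]; exact h.2⟩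

lemma blueAdj (c : Sym2 V3 → Fin 2) {x y : V3} (h : x.1 ≠ y.1) (h0 : c s(x, y) ≠ 0) :
    (colorClass (multiK 3 3) c 1).Adj x y :=
  ⟨h, fin2 _ h0⟩

set_option maxHeartbeats 4000000 in
set_option maxRecDepth 100000 in
set_option synthInstance.maxSize 100000 in
set_option synthInstance.maxHeartbeats 4000000 in
lemma lemB : ∀ u v : V3, u.1 ≠ v.1 →
    ∃ t0, (t0 ≠ u ∧ t0 ≠ v) ∧
    ∃ t1, (t1 ≠ u ∧ t1 ≠ v ∧ t1 ≠ t0 ∧ t0.1 ≠ t1.1) ∧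
    ∃ t2, (t2 ≠ u ∧ t2 ≠ v ∧ t2 ≠ t0 ∧ t2 ≠ t1 ∧ t1.1 ≠ t2.1) ∧
    ∃ t3, (t3 ≠ u ∧ t3 ≠ v ∧ t3 ≠ t0 ∧ t3 ≠ t1 ∧ t3 ≠ t2 ∧ t2.1 ≠ t3.1) ∧
    ∃ t4, (t4 ≠ u ∧ t4 ≠ v ∧ t4 ≠ t0 ∧ t4 ≠ t1 ∧ t4 ≠ t2 ∧ t4 ≠ t3 ∧ t3.1 ≠ t4.1) ∧
    ∃ t5, (t5 ≠ u ∧ t5 ≠ v ∧ t5 ≠ t0 ∧ t5 ≠ t1 ∧ t5 ≠ t2 ∧ t5 ≠ t3 ∧ t5 ≠ t4 ∧ t4.1 ≠ t5.1) ∧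
    ∃ t6, (t6 ≠ u ∧ t6 ≠ v ∧ t6 ≠ t0 ∧ t6 ≠ t1 ∧ t6 ≠ t2 ∧ t6 ≠ t3 ∧ t6 ≠ t4 ∧ t6 ≠ t5 ∧
      t5.1 ≠ t6.1 ∧ t6.1 ≠ t0.1) := by
  decide

set_option maxHeartbeats 400000000 in
set_option maxRecDepth 100000 in
set_option synthInstance.maxSize 100000 in
set_option synthInstance.maxHeartbeats 4000000 in
lemma lemCc : ∀ w2 s2 z1 z2 : V3,
    w2.1 ≠ s2.1 → ((0,0) : V3) ≠ w2 → ((0,0) : V3) ≠ s2 →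
    ((1,0) : V3) ≠ w2 → ((1,0) : V3) ≠ s2 →
    (∃ t1, (notS (0,0) (1,0) w2 s2 t1 ∧ (0 : Fin 3) ≠ t1.1 ∧ t1 ≠ z1) ∧
     ∃ t2, (notS (0,0) (1,0) w2 s2 t2 ∧ t2 ≠ t1 ∧ t1.1 ≠ t2.1 ∧ t2.1 ≠ w2.1 ∧ t2 ≠ z2) ∧
     ∃ t3, (notS (0,0) (1,0) w2 s2 t3 ∧ t3 ≠ t1 ∧ t3 ≠ t2 ∧ w2.1 ≠ t3.1 ∧ t3 ≠ z2) ∧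
     ∃ t4, (notS (0,0) (1,0) w2 s2 t4 ∧ t4 ≠ t1 ∧ t4 ≠ t2 ∧ t4 ≠ t3 ∧ t3.1 ≠ t4.1) ∧
     ∃ t5, (notS (0,0) (1,0) w2 s2 t5 ∧ t5 ≠ t1 ∧ t5 ≠ t2 ∧ t5 ≠ t3 ∧ t5 ≠ t4 ∧
       t4.1 ≠ t5.1 ∧ t5.1 ≠ (0 : Fin 3) ∧ t5 ≠ z1)) ∨
    (∃ t1, (notS (0,0) (1,0) w2 s2 t1 ∧ (0 : Fin 3) ≠ t1.1 ∧ t1.1 ≠ w2.1 ∧ t1 ≠ z1 ∧ t1 ≠ z2) ∧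
     ∃ t2, (notS (0,0) (1,0) w2 s2 t2 ∧ t2 ≠ t1 ∧ w2.1 ≠ t2.1 ∧ t2 ≠ z2) ∧
     ∃ t3, (notS (0,0) (1,0) w2 s2 t3 ∧ t3 ≠ t1 ∧ t3 ≠ t2 ∧ t2.1 ≠ t3.1) ∧
     ∃ t4, (notS (0,0) (1,0) w2 s2 t4 ∧ t4 ≠ t1 ∧ t4 ≠ t2 ∧ t4 ≠ t3 ∧ t3.1 ≠ t4.1) ∧
     ∃ t5, (notS (0,0) (1,0) w2 s2 t5 ∧ t5 ≠ t1 ∧ t5 ≠ t2 ∧ t5 ≠ t3 ∧ t5 ≠ t4 ∧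
       t4.1 ≠ t5.1 ∧ t5.1 ≠ (0 : Fin 3) ∧ t5 ≠ z1)) := by
  decide

/-- A permutation of the parts sending `p1` to `0` and `p2` to `1`. -/
def pEquiv (p1 p2 : Fin 3) : Equiv.Perm (Fin 3) :=
  (Equiv.swap 0 p1).trans (Equiv.swap 1 (Equiv.swap 0 p1 p2))

lemma pEquiv_p1 (p1 p2 : Fin 3) (h : p1 ≠ p2) : pEquiv p1 p2 p1 = 0 := by
  have hq : Equiv.swap 0 p1 p2 ≠ 0 := by
    intro he
    have h2 := (Equiv.swap 0 p1).injective (he.trans (Equiv.swap_apply_right 0 p1).symm)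
    exact h h2.symm
  show Equiv.swap 1 (Equiv.swap 0 p1 p2) (Equiv.swap 0 p1 p1) = 0
  rw [Equiv.swap_apply_right]
  exact Equiv.swap_apply_of_ne_of_ne (by decide) (Ne.symm hq)

lemma pEquiv_p2 (p1 p2 : Fin 3) : pEquiv p1 p2 p2 = 1 := by
  show Equiv.swap 1 (Equiv.swap 0 p1 p2) (Equiv.swap 0 p1 p2) = 1
  exact Equiv.swap_apply_right _ _

/-- Index permutations within each part. -/
def iEquiv (w1 s1 : V3) (p : Fin 3) : Equiv.Perm (Fin 3) :=
  if p = w1.1 then Equiv.swap 0 w1.2 else if p = s1.1 then Equiv.swap 0 s1.2 else Equiv.refl _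

/-- A part-preserving automorphism of `K_{3×3}` sending `w1 ↦ (0,0)` and `s1 ↦ (1,0)`. -/
def vEquiv (w1 s1 : V3) : V3 ≃ V3 where
  toFun x := (pEquiv w1.1 s1.1 x.1, iEquiv w1 s1 x.1 x.2)
  invFun y := ((pEquiv w1.1 s1.1).symm y.1,
    (iEquiv w1 s1 ((pEquiv w1.1 s1.1).symm y.1)).symm y.2)
  left_inv x := by simp only [Equiv.symm_apply_apply, Prod.mk.eta]
  right_inv y := by simp only [Equiv.apply_symm_apply, Prod.mk.eta]

lemma vEquiv_w1 (w1 s1 : V3) (h : w1.1 ≠ s1.1) : vEquiv w1 s1 w1 = ((0,0) : V3) := by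
  show (pEquiv w1.1 s1.1 w1.1, iEquiv w1 s1 w1.1 w1.2) = ((0,0) : V3)
  rw [pEquiv_p1 _ _ h]
  unfold iEquiv
  rw [if_pos rfl, Equiv.swap_apply_right]

lemma vEquiv_s1 (w1 s1 : V3) (h : w1.1 ≠ s1.1) : vEquiv w1 s1 s1 = ((1,0) : V3) := by
  show (pEquiv w1.1 s1.1 s1.1, iEquiv w1 s1 s1.1 s1.2) = ((1,0) : V3)
  rw [pEquiv_p2]
  unfold iEquiv
  rw [if_neg (Ne.symm h), if_pos rfl, Equiv.swap_apply_right]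

lemma contains_cycle7 {α : Type*} (G : SimpleGraph α) (x0 x1 x2 x3 x4 x5 x6 : α)
    (a01 : G.Adj x0 x1) (a12 : G.Adj x1 x2) (a23 : G.Adj x2 x3) (a34 : G.Adj x3 x4)
    (a45 : G.Adj x4 x5) (a56 : G.Adj x5 x6) (a60 : G.Adj x6 x0)
    (d02 : x0 ≠ x2) (d03 : x0 ≠ x3) (d04 : x0 ≠ x4) (d05 : x0 ≠ x5)
    (d13 : x1 ≠ x3) (d14 : x1 ≠ x4) (d15 : x1 ≠ x5) (d16 : x1 ≠ x6)
    (d24 : x2 ≠ x4) (d25 : x2 ≠ x5) (d26 : x2 ≠ x6)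
    (d35 : x3 ≠ x5) (d36 : x3 ≠ x6) (d46 : x4 ≠ x6) :
    Contains G (cycleGraph 7) := by
  have d01 := a01.ne; have d12 := a12.ne; have d23 := a23.ne; have d34 := a34.ne
  have d45 := a45.ne; have d56 := a56.ne; have d60 := a60.ne.symm
  refine ⟨![x0,x1,x2,x3,x4,x5,x6], ?_, ?_⟩
  · intro a b h
    fin_cases a <;> fin_cases b <;>
      first
        | rfl
        | exact absurd h d01 | exact absurd h d01.symm
        | exact absurd h d12 | exact absurd h d12.symm
        | exact absurd h d23 | exact absurd h d23.symm
        | exact absurd h d34 | exact absurd h d34.symm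
        | exact absurd h d45 | exact absurd h d45.symm
        | exact absurd h d56 | exact absurd h d56.symm
        | exact absurd h d60 | exact absurd h d60.symm
        | exact absurd h d02 | exact absurd h d02.symm
        | exact absurd h d03 | exact absurd h d03.symm
        | exact absurd h d04 | exact absurd h d04.symm
        | exact absurd h d05 | exact absurd h d05.symm
        | exact absurd h d13 | exact absurd h d13.symm
        | exact absurd h d14 | exact absurd h d14.symm
        | exact absurd h d15 | exact absurd h d15.symm
        | exact absurd h d16 | exact absurd h d16.symm
        | exact absurd h d24 | exact absurd h d24.symm
        | exact absurd h d25 | exact absurd h d25.symm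
        | exact absurd h d26 | exact absurd h d26.symm
        | exact absurd h d35 | exact absurd h d35.symm
        | exact absurd h d36 | exact absurd h d36.symm
        | exact absurd h d46 | exact absurd h d46.symm
  · intro a b hab
    fin_cases a <;> fin_cases b <;>
      first
        | exact absurd hab (by decide)
        | exact a01 | exact a01.symm | exact a12 | exact a12.symm
        | exact a23 | exact a23.symm | exact a34 | exact a34.symm
        | exact a45 | exact a45.symm | exact a56 | exact a56.symm
        | exact a60 | exact a60.symm

lemma contains_stripe3 {α : Type*} (G : SimpleGraph α) (p q r s t u : α)
    (hpq : G.Adj p q) (hrs : G.Adj r s) (htu : G.Adj t u)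
    (d1 : p ≠ r) (d2 : p ≠ s) (d3 : p ≠ t) (d4 : p ≠ u)
    (d5 : q ≠ r) (d6 : q ≠ s) (d7 : q ≠ t) (d8 : q ≠ u)
    (d9 : r ≠ t) (d10 : r ≠ u) (d11 : s ≠ t) (d12 : s ≠ u) :
    Contains G (stripe 3) := by
  have e1 := hpq.ne; have e2 := hrs.ne; have e3 := htu.ne
  refine ⟨fun v => ![![p,q],![r,s],![t,u]] v.1 v.2, ?_, ?_⟩
  · intro a b h
    obtain ⟨a1, a2⟩ := a; obtain ⟨b1, b2⟩ := b
    fin_cases a1 <;> fin_cases a2 <;> fin_cases b1 <;> fin_cases b2 <;>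
      first
        | rfl
        | exact absurd h e1 | exact absurd h e1.symm
        | exact absurd h e2 | exact absurd h e2.symm
        | exact absurd h e3 | exact absurd h e3.symm
        | exact absurd h d1 | exact absurd h d1.symm
        | exact absurd h d2 | exact absurd h d2.symm
        | exact absurd h d3 | exact absurd h d3.symm
        | exact absurd h d4 | exact absurd h d4.symm
        | exact absurd h d5 | exact absurd h d5.symm
        | exact absurd h d6 | exact absurd h d6.symm
        | exact absurd h d7 | exact absurd h d7.symm
        | exact absurd h d8 | exact absurd h d8.symm
        | exact absurd h d9 | exact absurd h d9.symm
        | exact absurd h d10 | exact absurd h d10.symm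
        | exact absurd h d11 | exact absurd h d11.symm
        | exact absurd h d12 | exact absurd h d12.symm
  · intro a b hab
    have hab' : a.1 = b.1 ∧ a.2 ≠ b.2 := hab
    obtain ⟨a1, a2⟩ := a; obtain ⟨b1, b2⟩ := b
    fin_cases a1 <;> fin_cases a2 <;> fin_cases b1 <;> fin_cases b2 <;>
      first
        | exact absurd hab'.1 (by decide)
        | exact absurd rfl hab'.2
        | exact hpq | exact hpq.symm | exact hrs | exact hrs.symm
        | exact htu | exact htu.symm

lemma contains_stripe2 {α : Type*} (G : SimpleGraph α) (p q r s : α)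
    (hpq : G.Adj p q) (hrs : G.Adj r s)
    (d1 : p ≠ r) (d2 : p ≠ s) (d5 : q ≠ r) (d6 : q ≠ s) :
    Contains G (stripe 2) := by
  have e1 := hpq.ne; have e2 := hrs.ne
  refine ⟨fun v => ![![p,q],![r,s]] v.1 v.2, ?_, ?_⟩
  · intro a b h
    obtain ⟨a1, a2⟩ := a; obtain ⟨b1, b2⟩ := b
    fin_cases a1 <;> fin_cases a2 <;> fin_cases b1 <;> fin_cases b2 <;>
      first
        | rfl
        | exact absurd h e1 | exact absurd h e1.symm
        | exact absurd h e2 | exact absurd h e2.symm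
        | exact absurd h d1 | exact absurd h d1.symm
        | exact absurd h d2 | exact absurd h d2.symm
        | exact absurd h d5 | exact absurd h d5.symm
        | exact absurd h d6 | exact absurd h d6.symm
  · intro a b hab
    have hab' : a.1 = b.1 ∧ a.2 ≠ b.2 := hab
    obtain ⟨a1, a2⟩ := a; obtain ⟨b1, b2⟩ := b
    fin_cases a1 <;> fin_cases a2 <;> fin_cases b1 <;> fin_cases b2 <;>
      first
        | exact absurd hab'.1 (by decide)
        | exact absurd rfl hab'.2
        | exact hpq | exact hpq.symm | exact hrs | exact hrs.symm

/-- If there is no red 2-matching, the blue graph contains a 7-cycle. -/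
lemma cyc_of_noM2 (c : Sym2 V3 → Fin 2) (h2 : ¬ M2 c) :
    Contains (colorClass (multiK 3 3) c 1) (cycleGraph 7) := by
  by_cases h1 : ∃ p q : V3, Rd c p q
  · obtain ⟨u, v, huv⟩ := h1
    have hB : ∀ x y : V3, x ≠ u → x ≠ v → y ≠ u → y ≠ v → x.1 ≠ y.1 →
        (colorClass (multiK 3 3) c 1).Adj x y := by
      intro x y hxu hxv hyu hyv hxy
      exact blueAdj c hxy fun h0 =>
        h2 ⟨u, v, x, y, huv, ⟨hxy, h0⟩, hxu.symm, hyu.symm, hxv.symm, hyv.symm⟩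
    obtain ⟨t0, ⟨g0u, g0v⟩, t1, ⟨g1u, g1v, n10, p01⟩, t2, ⟨g2u, g2v, n20, n21, p12⟩,
      t3, ⟨g3u, g3v, n30, n31, n32, p23⟩, t4, ⟨g4u, g4v, n40, n41, n42, n43, p34⟩,
      t5, ⟨g5u, g5v, n50, n51, n52, n53, n54, p45⟩,
      t6, g6u, g6v, n60, n61, n62, n63, n64, n65, p56, p60⟩ := lemB u v huv.1
    exact contains_cycle7 _ t0 t1 t2 t3 t4 t5 t6
      (hB _ _ g0u g0v g1u g1v p01) (hB _ _ g1u g1v g2u g2v p12) (hB _ _ g2u g2v g3u g3v p23)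
      (hB _ _ g3u g3v g4u g4v p34) (hB _ _ g4u g4v g5u g5v p45) (hB _ _ g5u g5v g6u g6v p56)
      (hB _ _ g6u g6v g0u g0v p60)
      n20.symm n30.symm n40.symm n50.symm n31.symm n41.symm n51.symm n61.symm
      n42.symm n52.symm n62.symm n53.symm n63.symm n64.symm
  · have hB : ∀ x y : V3, x.1 ≠ y.1 → (colorClass (multiK 3 3) c 1).Adj x y := by
      intro x y hxy
      exact blueAdj c hxy fun h0 => h1 ⟨x, y, hxy, h0⟩
    obtain ⟨t0, ⟨g0u, g0v⟩, t1, ⟨g1u, g1v, n10, p01⟩, t2, ⟨g2u, g2v, n20, n21, p12⟩,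
      t3, ⟨g3u, g3v, n30, n31, n32, p23⟩, t4, ⟨g4u, g4v, n40, n41, n42, n43, p34⟩,
      t5, ⟨g5u, g5v, n50, n51, n52, n53, n54, p45⟩,
      t6, g6u, g6v, n60, n61, n62, n63, n64, n65, p56, p60⟩ :=
        lemB ((0, 0) : V3) ((1, 0) : V3) (by decide)
    exact contains_cycle7 _ t0 t1 t2 t3 t4 t5 t6
      (hB _ _ p01) (hB _ _ p12) (hB _ _ p23) (hB _ _ p34) (hB _ _ p45) (hB _ _ p56)
      (hB _ _ p60)
      n20.symm n30.symm n40.symm n50.symm n31.symm n41.symm n51.symm n61.symm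
      n42.symm n52.symm n62.symm n53.symm n63.symm n64.symm

lemma buildC7canon (c : Sym2 V3 → Fin 2) (w2 s2 z1 z2 : V3)
    (hp2 : w2.1 ≠ s2.1)
    (h12 : ((0,0) : V3) ≠ w2) (h1s2 : ((0,0) : V3) ≠ s2)
    (hs12 : ((1,0) : V3) ≠ w2) (hss : ((1,0) : V3) ≠ s2)
    (hF : ∀ x y : V3, notS (0,0) (1,0) w2 s2 x → notS (0,0) (1,0) w2 s2 y → x.1 ≠ y.1 →
      c s(x, y) ≠ 0)
    (P1 : ∀ y, notS (0,0) (1,0) w2 s2 y → Rd c ((0,0) : V3) y → y = z1)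
    (P2 : ∀ y, notS (0,0) (1,0) w2 s2 y → Rd c w2 y → y = z2) :
    Contains (colorClass (multiK 3 3) c 1) (cycleGraph 7) := by
  rcases lemCc w2 s2 z1 z2 hp2 h12 h1s2 hs12 hss with
    ⟨t1, ⟨g1, p01, gz1⟩, t2, ⟨g2, n21, p12, p2w, gz2⟩, t3, ⟨g3, n31, n32, pw3, gz3⟩,
      t4, ⟨g4, n41, n42, n43, p34⟩, t5, ⟨g5, n51, n52, n53, n54, p45, p50, gz5⟩⟩ |
    ⟨t1, ⟨g1, p01, p1w, gz1, gz1'⟩, t2, ⟨g2, n21, pw2, gz2⟩, t3, ⟨g3, n31, n32, p23⟩,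
      t4, ⟨g4, n41, n42, n43, p34⟩, t5, ⟨g5, n51, n52, n53, n54, p45, p50, gz5⟩⟩
  · exact contains_cycle7 _ ((0,0) : V3) t1 t2 w2 t3 t4 t5
      (blueAdj c p01 fun h0 => gz1 (P1 t1 g1 ⟨p01, h0⟩))
      (blueAdj c p12 (hF t1 t2 g1 g2 p12))
      (blueAdj c p2w fun h0 => gz2 (P2 t2 g2 (Rd_symm ⟨p2w, h0⟩)))
      (blueAdj c pw3 fun h0 => gz3 (P2 t3 g3 ⟨pw3, h0⟩))
      (blueAdj c p34 (hF t3 t4 g3 g4 p34))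
      (blueAdj c p45 (hF t4 t5 g4 g5 p45))
      (blueAdj c p50 fun h0 => gz5 (P1 t5 g5 (Rd_symm ⟨p50, h0⟩)))
      (g2.1).symm h12 (g3.1).symm (g4.1).symm g1.2.2.1 n31.symm n41.symm n51.symm
      n32.symm n42.symm n52.symm (g4.2.2.1).symm (g5.2.2.1).symm n53.symm
  · exact contains_cycle7 _ ((0,0) : V3) t1 w2 t2 t3 t4 t5
      (blueAdj c p01 fun h0 => gz1 (P1 t1 g1 ⟨p01, h0⟩))
      (blueAdj c p1w fun h0 => gz1' (P2 t1 g1 (Rd_symm ⟨p1w, h0⟩)))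
      (blueAdj c pw2 fun h0 => gz2 (P2 t2 g2 ⟨pw2, h0⟩))
      (blueAdj c p23 (hF t2 t3 g2 g3 p23))
      (blueAdj c p34 (hF t3 t4 g3 g4 p34))
      (blueAdj c p45 (hF t4 t5 g4 g5 p45))
      (blueAdj c p50 fun h0 => gz5 (P1 t5 g5 (Rd_symm ⟨p50, h0⟩)))
      h12 (g2.1).symm (g3.1).symm (g4.1).symm n21.symm n31.symm n41.symm n51.symm
      (g3.2.2.1).symm (g4.2.2.1).symm (g5.2.2.1).symm n42.symm n52.symm n53.symm

lemma buildC7 (c : Sym2 V3 → Fin 2) (w1 s1 w2 s2 z1 z2 : V3)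
    (hp1 : w1.1 ≠ s1.1) (hp2 : w2.1 ≠ s2.1)
    (h12 : w1 ≠ w2) (h1s2 : w1 ≠ s2) (hs12 : s1 ≠ w2) (hss : s1 ≠ s2)
    (hF : ∀ x y : V3, notS w1 s1 w2 s2 x → notS w1 s1 w2 s2 y → x.1 ≠ y.1 → c s(x, y) ≠ 0)
    (P1 : ∀ y, notS w1 s1 w2 s2 y → Rd c w1 y → y = z1)
    (P2 : ∀ y, notS w1 s1 w2 s2 y → Rd c w2 y → y = z2) :
    Contains (colorClass (multiK 3 3) c 1) (cycleGraph 7) := by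
  set f : V3 ≃ V3 := vEquiv w1 s1 with hfdef
  have e1 : f w1 = ((0,0) : V3) := vEquiv_w1 w1 s1 hp1
  have e2 : f s1 = ((1,0) : V3) := vEquiv_s1 w1 s1 hp1
  set c' : Sym2 V3 → Fin 2 := fun e => c (Sym2.map (⇑f.symm) e) with hcdef
  have hc' : ∀ a b : V3, c' s(a, b) = c s(f.symm a, f.symm b) := by
    intro a b
    rw [hcdef]
    simp only [Sym2.map_pair_eq]
  have hpinj : ∀ {x y : V3}, (f x).1 = (f y).1 → x.1 = y.1 :=
    fun he => (pEquiv w1.1 s1.1).injective he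
  have hpinj' : ∀ {x y : V3}, (f.symm x).1 = (f.symm y).1 → x.1 = y.1 :=
    fun he => (pEquiv w1.1 s1.1).symm.injective he
  have hSw : ∀ y : V3, notS ((0,0) : V3) ((1,0) : V3) (f w2) (f s2) y →
      notS w1 s1 w2 s2 (f.symm y) := by
    intro y hy
    refine ⟨?_, ?_, ?_, ?_⟩
    · exact fun he => hy.1 (by rw [← f.apply_symm_apply y, he, e1])
    · exact fun he => hy.2.1 (by rw [← f.apply_symm_apply y, he, e2])
    · exact fun he => hy.2.2.1 (by rw [← f.apply_symm_apply y, he])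
    · exact fun he => hy.2.2.2 (by rw [← f.apply_symm_apply y, he])
  have hF' : ∀ x y : V3, notS ((0,0) : V3) ((1,0) : V3) (f w2) (f s2) x →
      notS ((0,0) : V3) ((1,0) : V3) (f w2) (f s2) y → x.1 ≠ y.1 → c' s(x, y) ≠ 0 := by
    intro x y hx hy hxy h0
    rw [hc'] at h0
    exact hF (f.symm x) (f.symm y) (hSw x hx) (hSw y hy) (fun he => hxy (hpinj' he)) h0
  have hw1symm : f.symm ((0,0) : V3) = w1 := by rw [← e1, f.symm_apply_apply]
  have P1' : ∀ y, notS ((0,0) : V3) ((1,0) : V3) (f w2) (f s2) y →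
      Rd c' ((0,0) : V3) y → y = f z1 := by
    intro y hy hr
    have hpart : w1.1 ≠ (f.symm y).1 := by
      intro he
      apply hr.1
      have h2 : (f w1).1 = (f (f.symm y)).1 := congrArg (pEquiv w1.1 s1.1) he
      rwa [e1, f.apply_symm_apply] at h2
    have hcol : c s(w1, f.symm y) = 0 := by
      have h2 := hr.2
      rw [hc'] at h2
      rwa [hw1symm] at h2
    have hz : f.symm y = z1 := P1 (f.symm y) (hSw y hy) ⟨hpart, hcol⟩
    rw [← f.apply_symm_apply y, hz]
  have P2' : ∀ y, notS ((0,0) : V3) ((1,0) : V3) (f w2) (f s2) y →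
      Rd c' (f w2) y → y = f z2 := by
    intro y hy hr
    have hpart : w2.1 ≠ (f.symm y).1 := by
      intro he
      apply hr.1
      have h2 : (f w2).1 = (f (f.symm y)).1 := congrArg (pEquiv w1.1 s1.1) he
      rwa [f.apply_symm_apply] at h2
    have hcol : c s(w2, f.symm y) = 0 := by
      have h2 := hr.2
      rw [hc'] at h2
      rwa [f.symm_apply_apply] at h2
    have hz : f.symm y = z2 := P2 (f.symm y) (hSw y hy) ⟨hpart, hcol⟩
    rw [← f.apply_symm_apply y, hz]
  have h12' : ((0,0) : V3) ≠ f w2 := fun he => h12 (f.injective (e1.trans he))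
  have h1s2' : ((0,0) : V3) ≠ f s2 := fun he => h1s2 (f.injective (e1.trans he))
  have hs12' : ((1,0) : V3) ≠ f w2 := fun he => hs12 (f.injective (e2.trans he))
  have hss' : ((1,0) : V3) ≠ f s2 := fun he => hss (f.injective (e2.trans he))
  have hp2' : (f w2).1 ≠ (f s2).1 := fun he => hp2 (hpinj he)
  obtain ⟨h, hinj, hadj⟩ :=
    buildC7canon c' (f w2) (f s2) (f z1) (f z2) hp2' h12' h1s2' hs12' hss' hF' P1' P2'
  refine ⟨(⇑f.symm) ∘ h, f.symm.injective.comp hinj, ?_⟩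
  intro a b hab
  have w := hadj hab
  refine ⟨fun he => w.1 (hpinj' he), ?_⟩
  have h2 := w.2
  rwa [hc'] at h2

/-- If there is a red 2-matching but no red 3-matching, blue contains a 7-cycle. -/
lemma cyc_of_M2_noM3 (c : Sym2 V3 → Fin 2) (h2 : M2 c) (h3 : ¬ M3 c) :
    Contains (colorClass (multiK 3 3) c 1) (cycleGraph 7) := by
  obtain ⟨ea, eb, ec, ed, R1, R2, dac, dad, dbc, dbd⟩ := h2
  have hab : ea ≠ eb := neP R1.1
  have hcd : ec ≠ ed := neP R2.1
  have hF0 : ∀ x y : V3, notS ea eb ec ed x → notS ea eb ec ed y → x.1 ≠ y.1 →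
      c s(x, y) ≠ 0 := by
    intro x y hx hy hxy h0
    exact h3 ⟨x, y, ea, eb, ec, ed, ⟨hxy, h0⟩, R1, R2,
      hx.1, hx.2.1, hx.2.2.1, hx.2.2.2, hy.1, hy.2.1, hy.2.2.1, hy.2.2.2,
      dac, dad, dbc, dbd⟩
  have hkey1 : ∀ x y : V3, notS ea eb ec ed x → notS ea eb ec ed y →
      Rd c ea x → Rd c eb y → x = y := by
    intro x y hx hy rx ry
    by_contra hne
    exact h3 ⟨ea, x, eb, y, ec, ed, rx, ry, R2,
      hab, hy.1.symm, dac, dad, hx.2.1, hne, hx.2.2.1, hx.2.2.2,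
      dbc, dbd, hy.2.2.1, hy.2.2.2⟩
  have hkey2 : ∀ x y : V3, notS ea eb ec ed x → notS ea eb ec ed y →
      Rd c ec x → Rd c ed y → x = y := by
    intro x y hx hy rx ry
    by_contra hne
    exact h3 ⟨ec, x, ed, y, ea, eb, rx, ry, R1,
      hcd, hy.2.2.1.symm, dac.symm, dbc.symm, hx.2.2.2, hne, hx.1, hx.2.1,
      dad.symm, dbd.symm, hy.1, hy.2.1⟩
  have hch1 : ∃ w1 s1 z1 : V3, ((w1 = ea ∧ s1 = eb) ∨ (w1 = eb ∧ s1 = ea)) ∧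
      ∀ y, notS ea eb ec ed y → Rd c w1 y → y = z1 := by
    by_cases hx : ∃ x, notS ea eb ec ed x ∧ Rd c ea x
    · obtain ⟨x0, hx0, hr0⟩ := hx
      exact ⟨eb, ea, x0, Or.inr ⟨rfl, rfl⟩, fun y hy hr => (hkey1 x0 y hx0 hy hr0 hr).symm⟩
    · exact ⟨ea, eb, ea, Or.inl ⟨rfl, rfl⟩, fun y hy hr => absurd ⟨y, hy, hr⟩ hx⟩
  have hch2 : ∃ w2 s2 z2 : V3, ((w2 = ec ∧ s2 = ed) ∨ (w2 = ed ∧ s2 = ec)) ∧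
      ∀ y, notS ea eb ec ed y → Rd c w2 y → y = z2 := by
    by_cases hx : ∃ x, notS ea eb ec ed x ∧ Rd c ec x
    · obtain ⟨x0, hx0, hr0⟩ := hx
      exact ⟨ed, ec, x0, Or.inr ⟨rfl, rfl⟩, fun y hy hr => (hkey2 x0 y hx0 hy hr0 hr).symm⟩
    · exact ⟨ec, ed, ec, Or.inl ⟨rfl, rfl⟩, fun y hy hr => absurd ⟨y, hy, hr⟩ hx⟩
  obtain ⟨w1, s1, z1, hd1, P1⟩ := hch1
  obtain ⟨w2, s2, z2, hd2, P2⟩ := hch2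
  have hSw : ∀ x, notS w1 s1 w2 s2 x → notS ea eb ec ed x := by
    intro x hx
    unfold notS at hx ⊢
    rcases hd1 with ⟨h1, h1'⟩ | ⟨h1, h1'⟩ <;> rcases hd2 with ⟨g1, g1'⟩ | ⟨g1, g1'⟩ <;>
      subst h1 <;> subst h1' <;> subst g1 <;> subst g1' <;> tauto
  have hp1 : w1.1 ≠ s1.1 := by
    rcases hd1 with ⟨h1, h1'⟩ | ⟨h1, h1'⟩ <;> subst h1 <;> subst h1' <;>
      first | exact R1.1 | exact R1.1.symm
  have hp2 : w2.1 ≠ s2.1 := by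
    rcases hd2 with ⟨h1, h1'⟩ | ⟨h1, h1'⟩ <;> subst h1 <;> subst h1' <;>
      first | exact R2.1 | exact R2.1.symm
  have h12 : w1 ≠ w2 := by
    rcases hd1 with ⟨h1, h1'⟩ | ⟨h1, h1'⟩ <;> rcases hd2 with ⟨g1, g1'⟩ | ⟨g1, g1'⟩ <;>
      subst h1 <;> subst h1' <;> subst g1 <;> subst g1' <;>
      first | exact dac | exact dad | exact dbc | exact dbd
  have h1s2 : w1 ≠ s2 := by
    rcases hd1 with ⟨h1, h1'⟩ | ⟨h1, h1'⟩ <;> rcases hd2 with ⟨g1, g1'⟩ | ⟨g1, g1'⟩ <;>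
      subst h1 <;> subst h1' <;> subst g1 <;> subst g1' <;>
      first | exact dac | exact dad | exact dbc | exact dbd
  have hs12 : s1 ≠ w2 := by
    rcases hd1 with ⟨h1, h1'⟩ | ⟨h1, h1'⟩ <;> rcases hd2 with ⟨g1, g1'⟩ | ⟨g1, g1'⟩ <;>
      subst h1 <;> subst h1' <;> subst g1 <;> subst g1' <;>
      first | exact dac | exact dad | exact dbc | exact dbd
  have hss : s1 ≠ s2 := by
    rcases hd1 with ⟨h1, h1'⟩ | ⟨h1, h1'⟩ <;> rcases hd2 with ⟨g1, g1'⟩ | ⟨g1, g1'⟩ <;>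
      subst h1 <;> subst h1' <;> subst g1 <;> subst g1' <;>
      first | exact dac | exact dad | exact dbc | exact dbd
  exact buildC7 c w1 s1 w2 s2 z1 z2 hp1 hp2 h12 h1s2 hs12 hss
    (fun x y hx hy hxy => hF0 x y (hSw x hx) (hSw y hy) hxy)
    (fun y hy => P1 y (hSw y hy)) (fun y hy => P2 y (hSw y hy))

lemma upper3 (c : Sym2 V3 → Fin 2) :
    Contains (colorClass (multiK 3 3) c 0) (stripe 3) ∨
    Contains (colorClass (multiK 3 3) c 1) (cycleGraph 7) := by
  by_cases h3 : M3 c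
  · left
    obtain ⟨p, q, r, s, t, u, h1, h2, h3', e1, e2, e3, e4, e5, e6, e7, e8, e9, e10, e11, e12⟩ := h3
    exact contains_stripe3 _ p q r s t u h1 h2 h3' e1 e2 e3 e4 e5 e6 e7 e8 e9 e10 e11 e12
  · right
    by_cases h2 : M2 c
    · exact cyc_of_M2_noM3 c h2 h3
    · exact cyc_of_noM2 c h2

lemma upper2 (c : Sym2 V3 → Fin 2) :
    Contains (colorClass (multiK 3 3) c 0) (stripe 2) ∨
    Contains (colorClass (multiK 3 3) c 1) (cycleGraph 7) := by
  by_cases h2 : M2 c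
  · left
    obtain ⟨p, q, r, s, h1, h2', e1, e2, e3, e4⟩ := h2
    exact contains_stripe2 _ p q r s h1 h2' e1 e2 e3 e4
  · right
    exact cyc_of_noM2 c h2

lemma not_stripe_one {j t n : ℕ} (hn : 0 < n) :
    ¬ Contains (colorClass (multiK j t) (fun _ => (1 : Fin 2)) (0 : Fin 2)) (stripe n) := by
  rintro ⟨f, -, hadj⟩
  have hst : (stripe n).Adj ((⟨0, hn⟩ : Fin n), (0 : Fin 2)) ((⟨0, hn⟩ : Fin n), (1 : Fin 2)) := ⟨rfl, Fin.zero_ne_one⟩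
  have h := hadj hst
  have h2 : (1 : Fin 2) = 0 := h.2
  exact absurd h2 (by decide)

lemma not_c7_small {j t : ℕ} (h : j * t < 7) (c : Sym2 (Fin j × Fin t) → Fin 2) (i : Fin 2) :
    ¬ Contains (colorClass (multiK j t) c i) (cycleGraph 7) := by
  rintro ⟨f, hinj, -⟩
  have hc := Fintype.card_le_of_injective f hinj
  simp only [Fintype.card_prod, Fintype.card_fin] at hc
  omega

theorem stmt10 (n : ℕ) (hn : n = 2 ∨ n = 3) :
    IsLeast {t : ℕ | 0 < t ∧ ArrowsC7 3 t n} 3 ∧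
    (∃ c : Sym2 (Fin 3 × Fin 2) → Fin 2,
      ¬ Contains (colorClass (multiK 3 2) c 0) (stripe n) ∧
      ¬ Contains (colorClass (multiK 3 2) c 1) (cycleGraph 7)) := by
  have hn0 : 0 < n := by omega
  constructor
  · constructor
    · refine ⟨by norm_num, ?_⟩
      rcases hn with rfl | rfl
      · exact fun c => upper2 c
      · exact fun c => upper3 c
    · intro x hx
      obtain ⟨hpos, hA⟩ := hx
      by_contra hlt
      push_neg at hlt
      rcases hA (fun _ => 1) with h | h
      · exact not_stripe_one hn0 h
      · exact not_c7_small (by omega) _ _ h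
  · exact ⟨fun _ => 1, not_stripe_one hn0, not_c7_small (by norm_num) _ _⟩
end
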